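/- arXiv:0712.3878 — 2 statements merged into one kernel-verified Lean document; each statement's English description precedes it below -/
import Mathlib

section
/- Let Y₁ and Y₂ be two distinct irreducible closed subvarieties of ℙⁿ of codimension at least 2, and let Y be a third irreducible closed subvariety of codimension at least 2. If Z is an irreducible component of Y₁ ∩ Y₂ (so that Δ(Z) is an intersection component of the join J(Y₁,Y₂) = Δ(Y₁) ∩ Δ(Y₂)) and Δ(Z) ⊆ Δ(Y), then Z ⊆ Y. -/
/-!
Common framework: projective space over a field `K` with its Zariski topology,
lines, the Grassmannian `𝔾(1,n)` of lines (with the quotient Zariski topology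
coming from the Stiefel-style parametrization by pairs of independent vectors),
the incidence variety `Δ(X)`, dimension of a subvariety as the topological Krull
dimension of the corresponding subspace, irreducible components, dense open
subsets, embedded projective tangent spaces, joins and (tri)secant varieties.
-/

open MvPolynomial
open scoped LinearAlgebra.Projectivization

noncomputable section

variable (K : Type) [Field K]

/-- Projective `n`-space over `K`, with homogeneous coordinates indexed by `Fin (n+1)`. -/
abbrev Pn (n : ℕ) := ℙ K (Fin (n + 1) → K)

/-- The Zariski topology on `ℙⁿ`: generated by the basic open sets `D(f)` of
nonvanishing of homogeneous polynomials (nonvanishing of a homogeneous polynomial is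
independent of the chosen representative). -/
instance projZariski (n : ℕ) : TopologicalSpace (Pn K n) :=
  TopologicalSpace.generateFrom
    {U | ∃ (f : MvPolynomial (Fin (n + 1)) K) (d : ℕ), f.IsHomogeneous d ∧
      U = {x : Pn K n | eval x.rep f ≠ 0}}

/-- The projective linear subspace of `ℙⁿ` associated to a linear subspace `W ⊆ K^{n+1}`
(a `k`-dimensional projective linear subspace corresponds to `finrank W = k + 1`). -/
def projLinear {n : ℕ} (W : Submodule K (Fin (n + 1) → K)) : Set (Pn K n) :=
  {x | x.rep ∈ W}

/-- `l ⊆ ℙⁿ` is a (projective) line. -/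
def IsLine {n : ℕ} (l : Set (Pn K n)) : Prop :=
  ∃ W : Submodule K (Fin (n + 1) → K), Module.finrank K W = 2 ∧ l = projLinear K W

/-- The Grassmannian `𝔾(1,n)` of lines in `ℙⁿ`. -/
def Grass (n : ℕ) := {l : Set (Pn K n) // IsLine K l}

/-- Pairs of linearly independent vectors of `K^{n+1}` (parametrizing lines of `ℙⁿ`),
with the Zariski topology. -/
def Stiefel2 (n : ℕ) := {vw : Fin 2 → Fin (n + 1) → K // LinearIndependent K vw}

/-- The affine Zariski topology on the space of pairs of vectors. -/
def affZariski2 (n : ℕ) : TopologicalSpace (Fin 2 → Fin (n + 1) → K) :=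
  TopologicalSpace.generateFrom
    {U | ∃ f : MvPolynomial (Fin 2 × Fin (n + 1)) K,
      U = {v | eval (fun p => v p.1 p.2) f ≠ 0}}

instance (n : ℕ) : TopologicalSpace (Stiefel2 K n) :=
  letI := affZariski2 K n
  inferInstanceAs (TopologicalSpace {vw : Fin 2 → Fin (n + 1) → K // LinearIndependent K vw})

/-- The line of `ℙⁿ` spanned by a pair of independent vectors. -/
def lineOf {n : ℕ} (vw : Stiefel2 K n) : Grass K n :=
  ⟨projLinear K (Submodule.span K (Set.range vw.1)),
    Submodule.span K (Set.range vw.1), by rw [finrank_span_eq_card vw.2]; simp, rfl⟩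

/-- The Zariski topology on the Grassmannian of lines: the quotient topology induced by the
parametrization by pairs of independent vectors. -/
instance (n : ℕ) : TopologicalSpace (Grass K n) :=
  TopologicalSpace.coinduced (lineOf K (n := n)) inferInstance

/-- `Δ(X)`: the variety of lines incident to `X`. -/
def Delta {n : ℕ} (X : Set (Pn K n)) : Set (Grass K n) :=
  {l | (l.1 ∩ X).Nonempty}

/-- The dimension of a subvariety `S` of a (Zariski-topologized) space: the topological
Krull dimension of `S` with the subspace topology (sup of lengths of chains of irreducible
closed subsets). -/
def sdim {α : Type*} [TopologicalSpace α] (S : Set α) : WithBot ℕ∞ :=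
  topologicalKrullDim S

/-- `C` is an irreducible component of `S`: a maximal irreducible closed subset of `S`. -/
def IsIrredCompOf {α : Type*} [TopologicalSpace α] (C S : Set α) : Prop :=
  C ⊆ S ∧ IsIrreducible C ∧ IsClosed C ∧
    ∀ C' : Set α, C ⊆ C' → C' ⊆ S → IsIrreducible C' → IsClosed C' → C' = C

/-- `U` is a dense open subset of `X` (open in the subspace topology of `X`, dense in `X`). -/
def IsDenseOpenIn {α : Type*} [TopologicalSpace α] (U X : Set α) : Prop :=
  U ⊆ X ∧ (∃ V : Set α, IsOpen V ∧ U = X ∩ V) ∧ X ⊆ closure U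

/-- The embedded projective tangent space of `X ⊆ ℙⁿ` at `p`: the zero locus of the
differentials at `p` of all homogeneous polynomials vanishing on `X`. -/
def tangentSpace {n : ℕ} (X : Set (Pn K n)) (p : Pn K n) : Set (Pn K n) :=
  {y | ∀ (f : MvPolynomial (Fin (n + 1)) K) (d : ℕ), f.IsHomogeneous d →
    (∀ x ∈ X, eval x.rep f = 0) →
    (∑ i, eval p.rep (pderiv i f) * y.rep i) = 0}

/-- The line of `ℙⁿ` through two (distinct) points. -/
def lineThrough {n : ℕ} (p q : Pn K n) : Set (Pn K n) :=
  projLinear K (Submodule.span K {p.rep, q.rep})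

/-- The set of lines spanned by pairs of distinct points `(p,q) ∈ Y₁ × Y₂`. -/
def joinLines {n : ℕ} (Y₁ Y₂ : Set (Pn K n)) : Set (Grass K n) :=
  {l | ∃ p ∈ Y₁, ∃ q ∈ Y₂, p ≠ q ∧ p ∈ l.1 ∧ q ∈ l.1}

/-- The joining component of the join `J(Y₁,Y₂)`: the closure in `𝔾(1,n)` of the set of
lines spanned by pairs of distinct points of `Y₁ × Y₂`. -/
def joiningComponent {n : ℕ} (Y₁ Y₂ : Set (Pn K n)) : Set (Grass K n) :=
  closure (joinLines K Y₁ Y₂)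

/-- The union of the lines belonging to a family `S ⊆ 𝔾(1,n)`. -/
def linesUnion {n : ℕ} (S : Set (Grass K n)) : Set (Pn K n) :=
  ⋃ l ∈ S, l.1

/-- `V₁,₃(Z)`: the variety of trisecant lines of `Z`, the closure in `𝔾(1,n)` of the set of
lines meeting `Z` in (at least) three pairwise distinct points. -/
def trisecants {n : ℕ} (Z : Set (Pn K n)) : Set (Grass K n) :=
  closure {l | ∃ p ∈ Z, ∃ q ∈ Z, ∃ s ∈ Z,
    p ≠ q ∧ p ≠ s ∧ q ≠ s ∧ p ∈ l.1 ∧ q ∈ l.1 ∧ s ∈ l.1}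

/-- `V₁,₃(Y,Z)`: the closure in `𝔾(1,n)` of the set of lines through a point of `Y` and two
distinct points of `Z \ Y`. -/
def trisecantsRel {n : ℕ} (Y Z : Set (Pn K n)) : Set (Grass K n) :=
  closure {l | ∃ p ∈ Y, ∃ q₁ ∈ Z \ Y, ∃ q₂ ∈ Z \ Y,
    q₁ ≠ q₂ ∧ p ∈ l.1 ∧ q₁ ∈ l.1 ∧ q₂ ∈ l.1}

/-- `Z` has degree at least 3: some line meets `Z` in at least three (isolated) points,
i.e. the (finite) intersection with some line has at least `3` points. -/
def degreeGE3 {n : ℕ} (Z : Set (Pn K n)) : Prop :=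
  ∃ l : Grass K n, (l.1 ∩ Z).Finite ∧ 3 ≤ (l.1 ∩ Z).ncard

end

/-! ### Auxiliary development -/

namespace TrisecAux

open MvPolynomial Projectivization TopologicalSpace

variable {K : Type} [Field K] {n : ℕ}

local notation "MvP" => MvPolynomial (Fin (n+1)) K
local notation "Amb" => (Fin (n+1) → K)

/-- Evaluation of a homogeneous polynomial at a scalar multiple. -/
lemma eval_homog_smul {f : MvP} {d : ℕ} (hf : f.IsHomogeneous d) (c : K) (v : Amb) :
    eval (c • v) f = c ^ d * eval v f := by
  rw [eval_eq, eval_eq, Finset.mul_sum]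
  refine Finset.sum_congr rfl fun m hm => ?_
  have hdeg : m.degree = d := by
    by_contra h
    exact (mem_support_iff.mp hm) (hf.coeff_eq_zero h)
  have : ∏ i ∈ m.support, (c • v) i ^ m i
      = c ^ d * ∏ i ∈ m.support, v i ^ m i := by
    have : ∏ i ∈ m.support, (c • v) i ^ m i
        = ∏ i ∈ m.support, (c ^ m i * v i ^ m i) := by
      refine Finset.prod_congr rfl fun i _ => ?_
      simp [mul_pow]
    rw [this, Finset.prod_mul_distrib, Finset.prod_pow_eq_pow_sum]
    rw [show ∑ i ∈ m.support, m i = m.degree from rfl, hdeg]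
  rw [this]; ring

lemma rep_mk_smul (v : Amb) (hv : v ≠ 0) :
    ∃ c : K, c ≠ 0 ∧ (Projectivization.mk K v hv).rep = c • v := by
  have h := Projectivization.mk_rep (Projectivization.mk K v hv)
  rw [Projectivization.mk_eq_mk_iff] at h
  obtain ⟨a, ha⟩ := h
  exact ⟨(a : K), a.ne_zero, ha.symm⟩

lemma eval_rep_mk_eq_zero_iff {f : MvP} {d : ℕ} (hf : f.IsHomogeneous d)
    {v : Amb} (hv : v ≠ 0) :
    eval (Projectivization.mk K v hv).rep f = 0 ↔ eval v f = 0 := by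
  obtain ⟨c, hc, hrep⟩ := rep_mk_smul v hv
  rw [hrep, eval_homog_smul hf]
  simp [pow_ne_zero _ hc, hc]

/-- From an open set and a point of it, produce a homogeneous "witness" polynomial. -/
lemma exists_homog_witness' {U : Set (Pn K n)} (hU : IsOpen U) :
    ∀ x ∈ U, ∃ (g : MvP) (d : ℕ), g.IsHomogeneous d ∧ eval x.rep g ≠ 0 ∧
      ∀ z : Pn K n, eval z.rep g ≠ 0 → z ∈ U := by
  have hU' : TopologicalSpace.GenerateOpen
      {U | ∃ (f : MvP) (d : ℕ), f.IsHomogeneous d ∧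
        U = {x : Pn K n | eval x.rep f ≠ 0}} U := hU
  clear hU
  induction hU' with
  | basic V hV =>
      obtain ⟨f, d, hf, rfl⟩ := hV
      exact fun x hx => ⟨f, d, hf, hx, fun z hz => hz⟩
  | univ => exact fun x _ => ⟨1, 0, isHomogeneous_one _ _, by simp, fun z _ => trivial⟩
  | inter U V hUo hVo ihU ihV =>
      intro x hx
      obtain ⟨gU, dU, hgU, hxU, hzU⟩ := ihU x hx.1
      obtain ⟨gV, dV, hgV, hxV, hzV⟩ := ihV x hx.2
      refine ⟨gU * gV, dU + dV, hgU.mul hgV, ?_, fun z hz => ?_⟩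
      · rw [map_mul]; exact mul_ne_zero hxU hxV
      · rw [map_mul] at hz
        exact ⟨hzU z (left_ne_zero_of_mul hz), hzV z (right_ne_zero_of_mul hz)⟩
  | sUnion S hS ih =>
      intro x hx
      obtain ⟨t, htS, hxt⟩ := hx
      obtain ⟨g, d, hg, hxg, hzg⟩ := ih t htS x hxt
      exact ⟨g, d, hg, hxg, fun z hz => ⟨t, htS, hzg z hz⟩⟩

lemma exists_homog_witness {U : Set (Pn K n)} (hU : IsOpen U) {x : Pn K n} (hx : x ∈ U) :
    ∃ (g : MvP) (d : ℕ), g.IsHomogeneous d ∧ eval x.rep g ≠ 0 ∧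
      ∀ z : Pn K n, eval z.rep g ≠ 0 → z ∈ U :=
  exists_homog_witness' hU x hx

/-- From a closed set and a point outside it, produce a homogeneous polynomial vanishing
on the closed set but not at the point. -/
lemma exists_homog_vanishing {F : Set (Pn K n)} (hF : IsClosed F) {x : Pn K n} (hx : x ∉ F) :
    ∃ (g : MvP) (d : ℕ), g.IsHomogeneous d ∧ eval x.rep g ≠ 0 ∧
      ∀ z ∈ F, eval z.rep g = 0 := by
  obtain ⟨g, d, hg, hxg, hz⟩ := exists_homog_witness hF.isOpen_compl hx
  exact ⟨g, d, hg, hxg, fun z hzF => by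
    by_contra h; exact (hz z h) hzF⟩

lemma isOpen_D {f : MvP} {d : ℕ} (hf : f.IsHomogeneous d) :
    IsOpen {x : Pn K n | eval x.rep f ≠ 0} :=
  TopologicalSpace.GenerateOpen.basic _ ⟨f, d, hf, rfl⟩

lemma isClosed_zeroLocus (T : Set MvP) (hT : ∀ f ∈ T, ∃ d, f.IsHomogeneous d) :
    IsClosed {x : Pn K n | ∀ f ∈ T, eval x.rep f = 0} := by
  rw [← isOpen_compl_iff]
  have : {x : Pn K n | ∀ f ∈ T, eval x.rep f = 0}ᶜ
      = ⋃ f ∈ T, {x : Pn K n | eval x.rep f ≠ 0} := by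
    ext x; simp [not_forall]
  rw [this]
  refine isOpen_biUnion fun f hf => ?_
  obtain ⟨d, hd⟩ := hT f hf
  exact isOpen_D hd

/-- A separating linear functional for a vector outside a subspace. -/
lemma exists_dual {W : Submodule K Amb} {v : Amb} (hv : v ∉ W) :
    ∃ φ : Amb →ₗ[K] K, (∀ w ∈ W, φ w = 0) ∧ φ v ≠ 0 := by
  have hqv : W.mkQ v ≠ 0 := by
    simpa [Submodule.Quotient.mk_eq_zero] using hv
  have : ∃ ψ : Module.Dual K (Amb ⧸ W), ψ (W.mkQ v) ≠ 0 := by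
    by_contra h
    push_neg at h
    exact hqv ((Module.forall_dual_apply_eq_zero_iff K _).mp h)
  obtain ⟨ψ, hψ⟩ := this
  refine ⟨ψ.comp W.mkQ, fun w hw => ?_, hψ⟩
  have hw0 : W.mkQ w = 0 := by
    rw [Submodule.mkQ_apply, Submodule.Quotient.mk_eq_zero]; exact hw
  simp [hw0]

/-- A linear functional as a degree-1 homogeneous polynomial. -/
noncomputable def linPoly (φ : Amb →ₗ[K] K) : MvP :=
  ∑ i, C (φ (fun j => if i = j then 1 else 0)) * X i

lemma linPoly_isHomogeneous (φ : Amb →ₗ[K] K) : (linPoly φ).IsHomogeneous 1 :=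
  IsHomogeneous.sum _ _ _ fun i _ => (isHomogeneous_X K i).C_mul _

lemma eval_linPoly (φ : Amb →ₗ[K] K) (v : Amb) : eval v (linPoly φ) = φ v := by
  rw [linPoly, map_sum, LinearMap.pi_apply_eq_sum_univ φ v]
  refine Finset.sum_congr rfl fun i _ => ?_
  simp [mul_comm]

lemma isClosed_projLinear (W : Submodule K Amb) : IsClosed (projLinear K W) := by
  rw [← isOpen_compl_iff, isOpen_iff_forall_mem_open]
  intro x hx
  obtain ⟨φ, hφW, hφx⟩ := exists_dual (W := W) (v := x.rep) hx
  refine ⟨{z : Pn K n | eval z.rep (linPoly φ) ≠ 0}, fun z hz => ?_,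
    isOpen_D (linPoly_isHomogeneous φ), by simpa [eval_linPoly] using hφx⟩
  intro hzW
  exact hz (by simpa [eval_linPoly] using hφW z.rep hzW)

lemma mk_eq_of_smul {v w : Amb} (hv : v ≠ 0) (hw : w ≠ 0) {c : K} (hc : c • w = v) :
    Projectivization.mk K v hv = Projectivization.mk K w hw := by
  have hcne : c ≠ 0 := by rintro rfl; simp at hc; exact hv hc.symm
  rw [Projectivization.mk_eq_mk_iff]
  exact ⟨Units.mk0 c hcne, hc⟩

lemma singleton_eq_projLinear (a : Pn K n) :
    {a} = projLinear K (Submodule.span K {a.rep}) := by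
  ext x
  simp only [Set.mem_singleton_iff, projLinear, Set.mem_setOf_eq,
    Submodule.mem_span_singleton]
  constructor
  · rintro rfl; exact ⟨1, one_smul _ _⟩
  · rintro ⟨c, hc⟩
    have := mk_eq_of_smul x.rep_nonzero a.rep_nonzero hc
    rwa [Projectivization.mk_rep, Projectivization.mk_rep] at this

lemma isClosed_singleton_pt (a : Pn K n) : IsClosed ({a} : Set (Pn K n)) := by
  rw [singleton_eq_projLinear]; exact isClosed_projLinear _

end TrisecAux
namespace TrisecAux

open MvPolynomial Projectivization TopologicalSpace FiniteDimensional

variable {K : Type} [Field K] {n : ℕ}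

local notation "MvP" => MvPolynomial (Fin (n+1)) K
local notation "Amb" => (Fin (n+1) → K)

lemma projLinear_nonempty {W : Submodule K Amb} (hW : W ≠ ⊥) :
    (projLinear K W).Nonempty := by
  obtain ⟨v, hvW, hv⟩ := Submodule.exists_mem_ne_zero_of_ne_bot hW
  refine ⟨Projectivization.mk K v hv, ?_⟩
  obtain ⟨c, hc, hrep⟩ := rep_mk_smul v hv
  show (Projectivization.mk K v hv).rep ∈ W
  rw [hrep]; exact W.smul_mem c hvW

/-- A nonzero polynomial over an infinite field has a nonvanishing point. -/
lemma exists_eval_ne_zero [Infinite K] {σ : Type*} {q : MvPolynomial σ K} (hq : q ≠ 0) :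
    ∃ w : σ → K, eval w q ≠ 0 := by
  by_contra h
  push_neg at h
  exact hq (MvPolynomial.funext (q := 0) (by simpa using h))

lemma projLinear_irreducible [Infinite K] {W : Submodule K Amb} (hW : W ≠ ⊥) :
    IsIrreducible (projLinear K W) := by
  classical
  refine ⟨projLinear_nonempty hW, ?_⟩
  rw [isPreirreducible_iff_isClosed_union_isClosed]
  intro F₁ F₂ hF₁ hF₂ hsub
  by_contra hcon
  push_neg at hcon
  obtain ⟨hns₁, hns₂⟩ := hcon
  obtain ⟨z₁, hz₁L, hz₁F⟩ := Set.not_subset.mp hns₁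
  obtain ⟨z₂, hz₂L, hz₂F⟩ := Set.not_subset.mp hns₂
  obtain ⟨g₁, d₁, hg₁, hg₁z, hg₁F⟩ := exists_homog_vanishing hF₁ hz₁F
  obtain ⟨g₂, d₂, hg₂, hg₂z, hg₂F⟩ := exists_homog_vanishing hF₂ hz₂F
  -- substitute a parametrization of W
  set r := Module.finrank K ↥W with hr
  have hrpos : 0 < r := by
    rw [hr]
    by_contra h
    push_neg at h
    exact hW ((Submodule.finrank_eq_zero).mp (by omega))
  let b : Module.Basis (Fin r) K ↥W := Module.finBasis K ↥W
  let SB : MvP →+* MvPolynomial (Fin r) K :=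
    eval₂Hom MvPolynomial.C (fun i => ∑ i' : Fin r, C (((b i' : Amb)) i) * X i')
  have hSB : ∀ (w : Fin r → K) (f : MvP),
      eval w (SB f) = eval (∑ i' : Fin r, w i' • ((b i' : Amb))) f := by
    intro w f
    have : (eval w).comp SB
        = (eval (∑ i' : Fin r, w i' • ((b i' : Amb)))) := by
      apply MvPolynomial.ringHom_ext
      · intro c; simp [SB]
      · intro i
        simp only [RingHom.comp_apply, SB, eval₂Hom_X', map_sum, map_mul, eval_C, eval_X,
          eval_X]
        rw [Finset.sum_apply]
        refine Finset.sum_congr rfl fun i' _ => ?_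
        simp [mul_comm]
    exact congrArg (fun ψ => ψ f) this
  have hcoords : ∀ z : Pn K n, z ∈ projLinear K W → ∀ f : MvP,
      ∃ w : Fin r → K, eval w (SB f) = eval z.rep f := by
    intro z hz f
    refine ⟨fun i' => b.repr ⟨z.rep, hz⟩ i', ?_⟩
    rw [hSB]
    have hsum : ∑ i' : Fin r, (b.repr ⟨z.rep, hz⟩) i' • ((b i' : Amb)) = z.rep := by
      have hb := b.sum_repr ⟨z.rep, hz⟩
      calc ∑ i' : Fin r, (b.repr ⟨z.rep, hz⟩) i' • ((b i' : Amb))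
          = ((∑ i' : Fin r, (b.repr ⟨z.rep, hz⟩) i' • b i' : ↥W) : Amb) := by
            push_cast [Submodule.coe_sum]; rfl
        _ = z.rep := by rw [hb]
    rw [hsum]
  obtain ⟨w₁, hw₁⟩ := hcoords z₁ hz₁L g₁
  obtain ⟨w₂, hw₂⟩ := hcoords z₂ hz₂L g₂
  have hq₁ : SB g₁ ≠ 0 := fun h => hg₁z (by rw [← hw₁, h, map_zero])
  have hq₂ : SB g₂ ≠ 0 := fun h => hg₂z (by rw [← hw₂, h, map_zero])
  have hX : (X (⟨0, hrpos⟩ : Fin r) : MvPolynomial (Fin r) K) ≠ 0 := MvPolynomial.X_ne_zero _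
  obtain ⟨w, hwne⟩ := exists_eval_ne_zero (mul_ne_zero (mul_ne_zero hq₁ hq₂) hX)
  simp only [map_mul] at hwne
  have hw0 : w ⟨0, hrpos⟩ ≠ 0 := by
    intro h; apply hwne; rw [eval_X, h, mul_zero]
  -- the point of W given by coordinates w
  set v : Amb := ∑ i' : Fin r, w i' • ((b i' : Amb)) with hv
  have hvW : v ∈ W := Submodule.sum_mem _ fun i' _ => W.smul_mem _ (b i').2
  have hvne : v ≠ 0 := by
    intro h
    have h' : (∑ i' : Fin r, w i' • b i' : ↥W) = 0 := by
      apply Subtype.ext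
      push_cast [Submodule.coe_sum] at h ⊢
      simpa [hv] using h
    have := (Fintype.linearIndependent_iff.mp b.linearIndependent) w h' ⟨0, hrpos⟩
    exact hw0 this
  have hzmem : Projectivization.mk K v hvne ∈ projLinear K W := by
    obtain ⟨c, hc, hrep⟩ := rep_mk_smul v hvne
    show (Projectivization.mk K v hvne).rep ∈ W
    rw [hrep]; exact W.smul_mem c hvW
  have hg₁v : eval v g₁ ≠ 0 := by
    rw [← hSB w g₁]; intro h; apply hwne; rw [h]; ring
  have hg₂v : eval v g₂ ≠ 0 := by
    rw [← hSB w g₂]; intro h; apply hwne; rw [h]; ring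
  have hz1 : Projectivization.mk K v hvne ∉ F₁ := by
    intro hmem
    have := hg₁F _ hmem
    rw [eval_rep_mk_eq_zero_iff hg₁ hvne] at this
    exact hg₁v this
  have hz2 : Projectivization.mk K v hvne ∉ F₂ := by
    intro hmem
    have := hg₂F _ hmem
    rw [eval_rep_mk_eq_zero_iff hg₂ hvne] at this
    exact hg₂v this
  rcases hsub hzmem with h | h
  · exact hz1 h
  · exact hz2 h

lemma exists_point_ne {W : Submodule K Amb} (hW : 2 ≤ Module.finrank K W)
    (p : Pn K n) : ∃ x : Pn K n, x ∈ projLinear K W ∧ x ≠ p := by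
  classical
  let b : Module.Basis (Fin (Module.finrank K ↥W)) K ↥W := Module.finBasis K ↥W
  have h0 : (0 : ℕ) < Module.finrank K ↥W := by omega
  have h1 : (1 : ℕ) < Module.finrank K ↥W := by omega
  set i0 : Fin (Module.finrank K ↥W) := ⟨0, h0⟩
  set i1 : Fin (Module.finrank K ↥W) := ⟨1, h1⟩
  have hne0 : ∀ i, ((b i : Amb)) ≠ 0 := by
    intro i h
    have : b i = 0 := Subtype.ext h
    exact b.ne_zero i this
  have hmem : ∀ i, Projectivization.mk K ((b i : Amb)) (hne0 i) ∈ projLinear K W := by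
    intro i
    obtain ⟨c, hc, hrep⟩ := rep_mk_smul _ (hne0 i)
    show Projectivization.rep _ ∈ W
    rw [hrep]; exact W.smul_mem c (b i).2
  have hdist : Projectivization.mk K ((b i0 : Amb)) (hne0 i0)
      ≠ Projectivization.mk K ((b i1 : Amb)) (hne0 i1) := by
    intro h
    rw [Projectivization.mk_eq_mk_iff] at h
    obtain ⟨a, ha⟩ := h
    have : (a : K) • b i1 = b i0 := Subtype.ext (by push_cast; exact ha)
    have h' := congrArg (fun x => b.repr x i1) this
    simp only [map_smul, Module.Basis.repr_self] at h'
    rw [Finsupp.smul_apply, Finsupp.single_apply, Finsupp.single_apply] at h'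
    have hne : i0 ≠ i1 := by simp [i0, i1, Fin.ext_iff]
    rw [if_pos rfl, if_neg hne] at h'
    simp only [smul_eq_mul, mul_one] at h'
    exact a.ne_zero h'
  by_cases h : Projectivization.mk K ((b i0 : Amb)) (hne0 i0) = p
  · exact ⟨_, hmem i1, by rw [← h]; exact (Ne.symm hdist)⟩
  · exact ⟨_, hmem i0, h⟩

lemma rep_add_smul_ne_zero {p x : Pn K n} (h : x ≠ p) (β : K) :
    p.rep + β • x.rep ≠ 0 := by
  intro h0
  have : p.rep = (-β) • x.rep := by
    rw [neg_smul, eq_neg_iff_add_eq_zero]; exact h0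
  have hβ : -β ≠ 0 := by
    intro hb
    rw [hb, zero_smul] at this
    exact p.rep_nonzero this
  have : p = x := by
    have := mk_eq_of_smul p.rep_nonzero x.rep_nonzero this.symm
    rwa [Projectivization.mk_rep, Projectivization.mk_rep] at this
  exact h this.symm

lemma pair_linearIndependent {p x : Pn K n} (h : x ≠ p) :
    LinearIndependent K ![p.rep, x.rep] := by
  rw [LinearIndependent.pair_iff]
  intro s t hst
  by_contra hc
  push_neg at hc
  by_cases hs : s = 0
  · subst hs
    simp only [zero_smul, zero_add] at hst
    rcases smul_eq_zero.mp hst with ht | hx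
    · exact (hc rfl) ht
    · exact x.rep_nonzero hx
  · have : p.rep + (t / s) • x.rep = 0 := by
      have := congrArg (fun v => s⁻¹ • v) hst
      simpa [smul_smul, inv_mul_cancel₀ hs, div_eq_inv_mul, mul_comm] using this
    exact rep_add_smul_ne_zero h (t / s) this

lemma finrank_span_pair {p x : Pn K n} (h : x ≠ p) :
    Module.finrank K ↥(Submodule.span K {p.rep, x.rep}) = 2 := by
  have h2 := finrank_span_eq_card (R := K) (pair_linearIndependent h)
  have hrange : Set.range ![p.rep, x.rep] = {p.rep, x.rep} := by
    ext v; simp [Matrix.range_cons, Matrix.range_empty, or_comm]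
  rw [hrange] at h2
  simpa using h2

end TrisecAux
namespace TrisecAux

open MvPolynomial Projectivization

variable {K : Type} [Field K] {n : ℕ}

local notation "MvP" => MvPolynomial (Fin (n+1)) K
local notation "Amb" => (Fin (n+1) → K)
local notation "BB" => MvPolynomial (Fin 2) (MvPolynomial (Fin (n+1)) K)

/-- Value of a binary form of degree `D` with coefficients `c` at `(a, b)`. -/
def bev (D : ℕ) (c : ℕ → K) (a b : K) : K :=
  ∑ j ∈ Finset.range (D+1), c j * (a ^ (D-j) * b ^ j)

/-- Substitution `Xᵢ ↦ uᵢ·s + Xᵢ·t` turning a polynomial in `X` into a binary form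
in `(s,t)` with coefficients that are polynomials in `X`. -/
noncomputable def Phi (u : Amb) : MvP →+* BB :=
  eval₂Hom ((MvPolynomial.C).comp (MvPolynomial.C))
    (fun i => MvPolynomial.C (MvPolynomial.C (u i)) * X 0 + MvPolynomial.C (X i) * X 1)

lemma Phi_isHomogeneous {f : MvP} {D : ℕ} (hf : f.IsHomogeneous D) (u : Amb) :
    (Phi u f).IsHomogeneous D := by
  have hg : ∀ i : Fin (n+1),
      ((MvPolynomial.C (MvPolynomial.C (u i)) * X 0 + MvPolynomial.C (X i) * X 1 : BB)).IsHomogeneous 1 :=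
    fun i => ((isHomogeneous_X _ _).C_mul _).add ((isHomogeneous_X _ _).C_mul _)
  have := hf.eval₂ ((MvPolynomial.C (σ := Fin 2)).comp (MvPolynomial.C (σ := Fin (n+1))))
    (fun i => MvPolynomial.C (MvPolynomial.C (u i)) * X 0 + MvPolynomial.C (X i) * X 1)
    (fun r => isHomogeneous_C _ _) hg
  rw [one_mul] at this
  exact this

/-- The coefficient polynomials of the binary form. -/
noncomputable def bcoef (u : Amb) (D : ℕ) (f : MvP) (j : ℕ) : MvP :=
  coeff (Finsupp.single (0 : Fin 2) (D - j) + Finsupp.single (1 : Fin 2) j) (Phi u f)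

lemma eval₂Hom_binary (ψ : MvP →+* K) (a b : K) {q : BB} {D : ℕ}
    (hq : q.IsHomogeneous D) :
    eval₂Hom ψ ![a, b] q
      = bev D (fun j => ψ (coeff (Finsupp.single (0 : Fin 2) (D - j)
          + Finsupp.single (1 : Fin 2) j) q)) a b := by
  classical
  set ι : ℕ → (Fin 2 →₀ ℕ) :=
    fun j => Finsupp.single (0 : Fin 2) (D - j) + Finsupp.single (1 : Fin 2) j with hι
  have hι0 : ∀ j, ι j 0 = D - j := by intro j; simp [hι, Finsupp.single_apply]
  have hι1 : ∀ j, ι j 1 = j := by intro j; simp [hι, Finsupp.single_apply]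
  have hdeg : ∀ m ∈ q.support, m 0 + m 1 = D := by
    intro m hm
    have h1 : m.degree = D := by
      by_contra h
      exact mem_support_iff.mp hm (hq.coeff_eq_zero h)
    have h2 : m.degree = ∑ i : Fin 2, m i := by
      rw [show m.degree = ∑ i ∈ m.support, m i from rfl]
      exact Finset.sum_subset (Finset.subset_univ _)
        (fun i _ hi => Finsupp.notMem_support_iff.mp hi)
    rw [h1] at h2
    rw [Fin.sum_univ_two] at h2
    omega
  have hmrec : ∀ m ∈ q.support, m = ι (m 1) := by
    intro m hm
    have := hdeg m hm
    ext i
    have hi : i = 0 ∨ i = 1 := by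
      rcases i with ⟨iv, hiv⟩
      interval_cases iv
      · exact Or.inl rfl
      · exact Or.inr rfl
    rcases hi with rfl | rfl
    · rw [hι0]; omega
    · rw [hι1]
  have himg : q.support ⊆ (Finset.range (D+1)).image ι := by
    intro m hm
    refine Finset.mem_image.mpr ⟨m 1, Finset.mem_range.mpr ?_, (hmrec m hm).symm⟩
    have := hdeg m hm; omega
  have hinj : ∀ j ∈ Finset.range (D+1), ∀ j' ∈ Finset.range (D+1), ι j = ι j' → j = j' := by
    intro j _ j' _ h
    have := congrArg (fun m => m 1) h
    simpa [hι1] using this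
  have hprod : ∀ j ∈ Finset.range (D+1),
      (∏ i ∈ (ι j).support, (![a, b] : Fin 2 → K) i ^ (ι j) i) = a ^ (D-j) * b ^ j := by
    intro j _
    have : (∏ i ∈ (ι j).support, (![a, b] : Fin 2 → K) i ^ (ι j) i)
        = ∏ i : Fin 2, (![a, b] : Fin 2 → K) i ^ (ι j) i := by
      refine Finset.prod_subset (Finset.subset_univ _) (fun i _ hi => ?_)
      rw [Finsupp.notMem_support_iff.mp hi, pow_zero]
    rw [this, Fin.prod_univ_two, hι0, hι1]
    simp
  calc eval₂Hom ψ ![a, b] q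
      = ∑ m ∈ q.support, ψ (coeff m q) * ∏ i ∈ m.support, (![a, b] : Fin 2 → K) i ^ m i :=
        eval₂_eq ψ _ q
    _ = ∑ m ∈ (Finset.range (D+1)).image ι,
          ψ (coeff m q) * ∏ i ∈ m.support, (![a, b] : Fin 2 → K) i ^ m i := by
        refine Finset.sum_subset himg (fun m _ hm => ?_)
        rw [notMem_support_iff.mp hm, map_zero, zero_mul]
    _ = ∑ j ∈ Finset.range (D+1),
          ψ (coeff (ι j) q) * ∏ i ∈ (ι j).support, (![a, b] : Fin 2 → K) i ^ (ι j) i := by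
        rw [Finset.sum_image hinj]
    _ = bev D (fun j => ψ (coeff (ι j) q)) a b := by
        refine Finset.sum_congr rfl (fun j hj => ?_)
        rw [hprod j hj]

lemma eval₂Hom_Phi (u v : Amb) (a b : K) (f : MvP) :
    eval₂Hom (eval v) ![a, b] (Phi u f) = eval (a • u + b • v) f := by
  have h : ((eval₂Hom (eval v) ![a, b]).comp (Phi u)) = (eval (a • u + b • v)) := by
    apply MvPolynomial.ringHom_ext
    · intro r
      simp [Phi]
    · intro i
      simp only [RingHom.comp_apply, Phi, eval₂Hom_X', map_add, map_mul, eval₂Hom_C,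
        eval_C, eval_X]
      simp only [Matrix.cons_val_zero, Matrix.cons_val_one, Matrix.head_cons]
      simp only [Pi.add_apply, Pi.smul_apply, smul_eq_mul]
      ring
  exact congrArg (fun (ρ : MvP →+* K) => ρ f) h

/-- The key identity: the binary form with coefficients `eval v (bcoef u D f j)`
computes `f` on the pencil spanned by `u` and `v`. -/
lemma bev_bcoef {f : MvP} {D : ℕ} (hf : f.IsHomogeneous D) (u v : Amb) (a b : K) :
    bev D (fun j => eval v (bcoef u D f j)) a b = eval (a • u + b • v) f := by
  rw [← eval₂Hom_Phi u v a b f, eval₂Hom_binary (eval v) a b (Phi_isHomogeneous hf u)]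
  rfl

lemma bev_one_zero (D : ℕ) (c : ℕ → K) : bev D c 1 0 = c 0 := by
  rw [bev]
  rw [Finset.sum_eq_single 0]
  · simp
  · intro j _ hj
    rw [zero_pow hj]; ring
  · intro h
    simp at h

lemma bev_zero_left (D : ℕ) (c : ℕ → K) (b : K) : bev D c 0 b = c D * b ^ D := by
  rw [bev]
  rw [Finset.sum_eq_single D]
  · simp
  · intro j hj hjD
    have : D - j ≠ 0 := by
      rw [Finset.mem_range] at hj; omega
    rw [zero_pow this]; ring
  · intro h
    simp at h

/-- The univariate dehomogenization of a binary form. -/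
noncomputable def uPoly (D : ℕ) (c : ℕ → K) : Polynomial K :=
  ∑ j ∈ Finset.range (D+1), Polynomial.C (c j) * Polynomial.X ^ j

lemma uPoly_eval (D : ℕ) (c : ℕ → K) (β : K) :
    (uPoly D c).eval β = bev D c 1 β := by
  rw [uPoly, bev, Polynomial.eval_finset_sum]
  refine Finset.sum_congr rfl fun j _ => ?_
  simp

lemma uPoly_coeff (D : ℕ) (c : ℕ → K) {j : ℕ} (hj : j ≤ D) :
    (uPoly D c).coeff j = c j := by
  rw [uPoly, Polynomial.finset_sum_coeff]
  rw [Finset.sum_eq_single j]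
  · simp
  · intro k _ hk
    simp only [Polynomial.coeff_C_mul, Polynomial.coeff_X_pow]
    rw [if_neg (fun h => hk h.symm)]
    ring
  · intro h
    exact absurd (Finset.mem_range.mpr (by omega)) h

lemma uPoly_natDegree_le (D : ℕ) (c : ℕ → K) : (uPoly D c).natDegree ≤ D := by
  refine Polynomial.natDegree_sum_le_of_forall_le _ _ fun j hj => ?_
  refine le_trans (Polynomial.natDegree_C_mul_le _ _) ?_
  rw [Polynomial.natDegree_X_pow]
  exact Nat.lt_succ_iff.mp (Finset.mem_range.mp hj)

lemma bev_eq_pow_mul_eval {a : K} (ha : a ≠ 0) (D : ℕ) (c : ℕ → K) (b : K) :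
    bev D c a b = a ^ D * (uPoly D c).eval (b / a) := by
  rw [uPoly, Polynomial.eval_finset_sum, Finset.mul_sum, bev]
  refine Finset.sum_congr rfl fun j hj => ?_
  have hjD : j ≤ D := Nat.lt_succ_iff.mp (Finset.mem_range.mp hj)
  simp only [Polynomial.eval_mul, Polynomial.eval_C, Polynomial.eval_pow, Polynomial.eval_X]
  rw [div_pow, pow_sub₀ a ha hjD]
  field_simp

end TrisecAux
namespace TrisecAux

open MvPolynomial Polynomial

/-- Sylvester-style matrix of a pair of binary forms of degree `D` given by
coefficient functions. -/
def sylv {R : Type*} [CommRing R] (D : ℕ) (cF cG : ℕ → R) :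
    Matrix (Fin (2*D)) (Fin (2*D)) R :=
  fun j k => if (k : ℕ) < D
    then (if (k : ℕ) ≤ (j : ℕ) ∧ (j : ℕ) ≤ (k : ℕ) + D then cF ((j : ℕ) - (k : ℕ)) else 0)
    else (if (k : ℕ) - D ≤ (j : ℕ) ∧ (j : ℕ) ≤ ((k : ℕ) - D) + D
      then cG ((j : ℕ) - ((k : ℕ) - D)) else 0)

lemma sylv_map {R S : Type*} [CommRing R] [CommRing S] (ψ : R →+* S)
    (D : ℕ) (cF cG : ℕ → R) :
    (sylv D cF cG).map ψ = sylv D (fun j => ψ (cF j)) (fun j => ψ (cG j)) := by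
  ext j k
  simp only [Matrix.map_apply, sylv]
  split_ifs <;> simp

lemma map_sylv_det {R S : Type*} [CommRing R] [CommRing S] (ψ : R →+* S)
    (D : ℕ) (cF cG : ℕ → R) :
    ψ (sylv D cF cG).det
      = (sylv D (fun j => ψ (cF j)) (fun j => ψ (cG j))).det := by
  classical
  rw [RingHom.map_det, RingHom.mapMatrix_apply, sylv_map]

variable {K : Type} [Field K]

/-- Row-sum computation used in the vanishing direction. -/
lemma sylv_row_sum (D : ℕ) (hD : 0 < D) (k' : ℕ) (hk' : k' < D) (c : ℕ → K) (a b : K) :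
    ∑ jn ∈ Finset.range (2*D),
      (a ^ (2*D-1-jn) * b ^ jn * (if k' ≤ jn ∧ jn ≤ k' + D then c (jn - k') else 0))
    = a ^ (D-1-k') * b ^ k' * bev D c a b := by
  classical
  have hfilter : (Finset.range (2*D)).filter (fun jn => k' ≤ jn ∧ jn ≤ k' + D)
      = Finset.Icc k' (k' + D) := by
    ext jn
    simp only [Finset.mem_filter, Finset.mem_range, Finset.mem_Icc]
    omega
  have h1 : ∑ jn ∈ Finset.range (2*D),
      (a ^ (2*D-1-jn) * b ^ jn * (if k' ≤ jn ∧ jn ≤ k' + D then c (jn - k') else 0))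
      = ∑ jn ∈ Finset.Icc k' (k' + D), a ^ (2*D-1-jn) * b ^ jn * c (jn - k') := by
    rw [← hfilter, Finset.sum_filter]
    refine Finset.sum_congr rfl fun jn _ => ?_
    split_ifs with h
    · rfl
    · ring
  rw [h1]
  have h2 : ∑ jn ∈ Finset.Icc k' (k' + D), a ^ (2*D-1-jn) * b ^ jn * c (jn - k')
      = ∑ i ∈ Finset.range (D+1), a ^ (2*D-1-(k'+i)) * b ^ (k'+i) * c i := by
    rw [show Finset.Icc k' (k' + D) = Finset.Ico k' (k' + D + 1) by
      rw [Finset.Ico_add_one_right_eq_Icc]]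
    rw [Finset.sum_Ico_eq_sum_range]
    refine Finset.sum_congr (by congr 1; omega) fun i _ => ?_
    congr 2 <;> omega
  rw [h2, bev, Finset.mul_sum]
  refine Finset.sum_congr rfl fun i hi => ?_
  have hiD : i ≤ D := Nat.lt_succ_iff.mp (Finset.mem_range.mp hi)
  have he : 2*D-1-(k'+i) = (D-1-k') + (D-i) := by omega
  rw [he, pow_add, pow_add]
  ring

/-- If the two binary forms have a common nontrivial zero, the Sylvester
determinant vanishes. -/
lemma sylv_det_eq_zero {D : ℕ} (hD : 0 < D) (cF cG : ℕ → K) {a b : K}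
    (hab : ¬(a = 0 ∧ b = 0)) (hF : bev D cF a b = 0) (hG : bev D cG a b = 0) :
    (sylv D cF cG).det = 0 := by
  classical
  rw [← Matrix.exists_vecMul_eq_zero_iff]
  refine ⟨fun j => a ^ (2*D-1-(j : ℕ)) * b ^ (j : ℕ), ?_, ?_⟩
  · intro h0
    by_cases ha : a = 0
    · have hb : b ≠ 0 := fun hb => hab ⟨ha, hb⟩
      have := congrFun h0 ⟨2*D-1, by omega⟩
      simp only [Pi.zero_apply] at this
      rw [show 2*D-1-(2*D-1) = 0 by omega, pow_zero, one_mul] at this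
      exact pow_ne_zero _ hb this
    · have := congrFun h0 ⟨0, by omega⟩
      simp only [Pi.zero_apply] at this
      rw [Nat.sub_zero, pow_zero, mul_one] at this
      exact pow_ne_zero _ ha this
  · funext k
    have hsum : (Matrix.vecMul (fun j : Fin (2*D) => a ^ (2*D-1-(j : ℕ)) * b ^ (j : ℕ))
        (sylv D cF cG)) k
        = ∑ j : Fin (2*D), a ^ (2*D-1-(j : ℕ)) * b ^ (j : ℕ) * (sylv D cF cG) j k := by
      simp [Matrix.vecMul, dotProduct]
    rw [hsum]
    have hconv : ∑ j : Fin (2*D), a ^ (2*D-1-(j : ℕ)) * b ^ (j : ℕ) * (sylv D cF cG) j k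
        = ∑ jn ∈ Finset.range (2*D), a ^ (2*D-1-jn) * b ^ jn *
            (if (k : ℕ) < D
              then (if (k : ℕ) ≤ jn ∧ jn ≤ (k : ℕ) + D then cF (jn - (k : ℕ)) else 0)
              else (if (k : ℕ) - D ≤ jn ∧ jn ≤ ((k : ℕ) - D) + D
                then cG (jn - ((k : ℕ) - D)) else 0)) := by
      rw [← Fin.sum_univ_eq_sum_range]
      rfl
    rw [hconv]
    by_cases hk : (k : ℕ) < D
    · simp only [if_pos hk]
      rw [sylv_row_sum D hD (k : ℕ) hk cF a b, hF]
      simp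
    · simp only [if_neg hk]
      have hk' : (k : ℕ) - D < D := by
        have := k.isLt; omega
      rw [sylv_row_sum D hD ((k : ℕ) - D) hk' cG a b, hG]
      simp

end TrisecAux
namespace TrisecAux

open MvPolynomial Polynomial

variable {K : Type} [Field K]

lemma coeff_uPoly_mul_X_pow (D : ℕ) (c : ℕ → K) (k t : ℕ) :
    (uPoly D c * Polynomial.X ^ k).coeff t
      = if k ≤ t ∧ t ≤ k + D then c (t - k) else 0 := by
  rw [Polynomial.coeff_mul_X_pow']
  by_cases h1 : k ≤ t
  · rw [if_pos h1]
    by_cases h2 : t ≤ k + D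
    · rw [if_pos ⟨h1, h2⟩, uPoly_coeff D c (by omega : t - k ≤ D)]
    · rw [if_neg (fun h => h2 h.2)]
      exact Polynomial.coeff_eq_zero_of_natDegree_lt
        (lt_of_le_of_lt (uPoly_natDegree_le D c) (by omega))
  · rw [if_neg h1, if_neg (fun h => h1 h.1)]

lemma uPoly_ne_zero_of_coeff {D : ℕ} {c : ℕ → K} {j : ℕ} (hj : j ≤ D) (h : c j ≠ 0) :
    uPoly D c ≠ 0 := fun h0 => h (by rw [← uPoly_coeff D c hj, h0, Polynomial.coeff_zero])

/-- If the two binary forms of degree `D` have no common nontrivial zero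
(and the first has nonzero `s^D`-coefficient), the Sylvester determinant
is nonzero. -/
lemma sylv_det_ne_zero [IsAlgClosed K] {D : ℕ} (hD : 0 < D) (cF cG : ℕ → K)
    (hc0 : cF 0 ≠ 0)
    (hroot : ∀ a b : K, ¬(a = 0 ∧ b = 0) → bev D cF a b = 0 → bev D cG a b ≠ 0) :
    (sylv D cF cG).det ≠ 0 := by
  classical
  intro hdet
  obtain ⟨c, hc, hMc⟩ := Matrix.exists_mulVec_eq_zero_iff.mpr hdet
  set cc : ℕ → K := fun i => if h : i < 2*D then c ⟨i, h⟩ else 0 with hcc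
  set f := uPoly D cF with hf
  set g := uPoly D cG with hg
  set U := uPoly (D-1) cc with hU
  set V := uPoly (D-1) (fun i => cc (D + i)) with hV
  -- the polynomial identity U f + V g = 0
  have hrow : ∀ t : ℕ, t < 2*D →
      (∑ i ∈ Finset.range D, cc i * (f * Polynomial.X ^ i).coeff t)
        + (∑ i ∈ Finset.range D, cc (D + i) * (g * Polynomial.X ^ i).coeff t) = 0 := by
    intro t ht
    have h0 := congrFun hMc ⟨t, ht⟩
    simp only [Matrix.mulVec, dotProduct, Pi.zero_apply] at h0
    rw [← h0]
    have hsplit : ∑ k : Fin (2*D), (sylv D cF cG) ⟨t, ht⟩ k * c k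
        = ∑ kn ∈ Finset.range (2*D),
            (if kn < D
              then (if kn ≤ t ∧ t ≤ kn + D then cF (t - kn) else 0)
              else (if kn - D ≤ t ∧ t ≤ (kn - D) + D then cG (t - (kn - D)) else 0)) * cc kn := by
      rw [← Fin.sum_univ_eq_sum_range
        (fun kn => (if kn < D
          then (if kn ≤ t ∧ t ≤ kn + D then cF (t - kn) else 0)
          else (if kn - D ≤ t ∧ t ≤ (kn - D) + D then cG (t - (kn - D)) else 0)) * cc kn)]
      refine Finset.sum_congr rfl fun k _ => ?_
      have : cc (k : ℕ) = c k := by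
        rw [hcc]; simp only [k.isLt, dif_pos]
      rw [this]
      rfl
    rw [hsplit]
    have hsplit2 : ∑ kn ∈ Finset.range (2*D),
        (if kn < D
          then (if kn ≤ t ∧ t ≤ kn + D then cF (t - kn) else 0)
          else (if kn - D ≤ t ∧ t ≤ (kn - D) + D then cG (t - (kn - D)) else 0)) * cc kn
        = (∑ kn ∈ Finset.range D,
            (if kn ≤ t ∧ t ≤ kn + D then cF (t - kn) else 0) * cc kn)
          + ∑ i ∈ Finset.range D,
            (if i ≤ t ∧ t ≤ i + D then cG (t - i) else 0) * cc (D + i) := by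
      rw [show 2*D = D + D by ring, Finset.sum_range_add]
      congr 1
      · refine Finset.sum_congr rfl fun kn hkn => ?_
        rw [if_pos (Finset.mem_range.mp hkn)]
      · refine Finset.sum_congr rfl fun i _ => ?_
        rw [if_neg (by omega : ¬ D + i < D), show D + i - D = i by omega]
    rw [hsplit2]
    congr 1
    · refine Finset.sum_congr rfl fun i _ => ?_
      rw [coeff_uPoly_mul_X_pow]
      ring
    · refine Finset.sum_congr rfl fun i _ => ?_
      rw [coeff_uPoly_mul_X_pow]
      ring
  have hcoeffUf : ∀ t, (U * f).coeff t = ∑ i ∈ Finset.range D, cc i * (f * Polynomial.X ^ i).coeff t := by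
    intro t
    have : U * f = ∑ i ∈ Finset.range D, Polynomial.C (cc i) * (f * Polynomial.X ^ i) := by
      rw [hU, uPoly, show D - 1 + 1 = D by omega, Finset.sum_mul]
      refine Finset.sum_congr rfl fun i _ => ?_
      ring
    rw [this, Polynomial.finset_sum_coeff]
    refine Finset.sum_congr rfl fun i _ => ?_
    rw [Polynomial.coeff_C_mul]
  have hcoeffVg : ∀ t, (V * g).coeff t
      = ∑ i ∈ Finset.range D, cc (D + i) * (g * Polynomial.X ^ i).coeff t := by
    intro t
    have : V * g = ∑ i ∈ Finset.range D, Polynomial.C (cc (D + i)) * (g * Polynomial.X ^ i) := by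
      rw [hV, uPoly, show D - 1 + 1 = D by omega, Finset.sum_mul]
      refine Finset.sum_congr rfl fun i _ => ?_
      ring
    rw [this, Polynomial.finset_sum_coeff]
    refine Finset.sum_congr rfl fun i _ => ?_
    rw [Polynomial.coeff_C_mul]
  have hid : U * f + V * g = 0 := by
    ext t
    rw [Polynomial.coeff_add, Polynomial.coeff_zero, hcoeffUf, hcoeffVg]
    by_cases ht : t < 2*D
    · exact hrow t ht
    · have hzf : ∀ i ∈ Finset.range D, cc i * (f * Polynomial.X ^ i).coeff t = 0 := by
        intro i hi
        rw [coeff_uPoly_mul_X_pow, if_neg (by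
          rw [Finset.mem_range] at hi; omega)]
        ring
      have hzg : ∀ i ∈ Finset.range D, cc (D + i) * (g * Polynomial.X ^ i).coeff t = 0 := by
        intro i hi
        rw [coeff_uPoly_mul_X_pow, if_neg (by
          rw [Finset.mem_range] at hi; omega)]
        ring
      rw [Finset.sum_congr rfl hzf, Finset.sum_congr rfl hzg]
      simp
  -- nontriviality of (U, V)
  have hUV : U ≠ 0 ∨ V ≠ 0 := by
    have : ∃ k : Fin (2*D), c k ≠ 0 := by
      by_contra h
      push_neg at h
      exact hc (funext h)
    obtain ⟨k, hk⟩ := this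
    have hck : cc (k : ℕ) ≠ 0 := by
      rw [hcc]; simpa [k.isLt] using hk
    by_cases hkD : (k : ℕ) < D
    · exact Or.inl (uPoly_ne_zero_of_coeff (by omega : (k : ℕ) ≤ D - 1) hck)
    · refine Or.inr (uPoly_ne_zero_of_coeff (j := (k : ℕ) - D)
        (by have := k.isLt; omega) ?_)
      rw [show D + ((k : ℕ) - D) = (k : ℕ) by have := k.isLt; omega]
      exact hck
  have hfne : f ≠ 0 := uPoly_ne_zero_of_coeff (Nat.zero_le D) hc0
  -- coprimality
  have hcop : IsCoprime f g := by
    rw [← EuclideanDomain.gcd_isUnit_iff]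
    by_contra hu
    have hd0 : EuclideanDomain.gcd f g ≠ 0 := by
      intro h
      exact hfne (EuclideanDomain.gcd_eq_zero_iff.mp h).1
    have hdeg : (EuclideanDomain.gcd f g).degree ≠ 0 := by
      intro h
      exact hu (Polynomial.isUnit_iff_degree_eq_zero.mpr h)
    obtain ⟨β, hβ⟩ := IsAlgClosed.exists_root _ hdeg
    have hfβ : f.eval β = 0 :=
      Polynomial.eval_eq_zero_of_dvd_of_eval_eq_zero (EuclideanDomain.gcd_dvd_left f g) hβ
    have hgβ : g.eval β = 0 :=
      Polynomial.eval_eq_zero_of_dvd_of_eval_eq_zero (EuclideanDomain.gcd_dvd_right f g) hβ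
    refine hroot 1 β (by simp) ?_ ?_
    · rw [← uPoly_eval]; exact hfβ
    · rw [← uPoly_eval]; exact hgβ
  have hVDle : V.natDegree ≤ D - 1 := uPoly_natDegree_le _ _
  have hUDle : U.natDegree ≤ D - 1 := uPoly_natDegree_le _ _
  by_cases hFD : cF D ≠ 0
  · -- natDegree f = D
    have hdf : f.natDegree = D :=
      le_antisymm (uPoly_natDegree_le D cF)
        (Polynomial.le_natDegree_of_ne_zero (by rw [uPoly_coeff D cF le_rfl]; exact hFD))
    have hdvd : f ∣ V := by
      refine IsCoprime.dvd_of_dvd_mul_right hcop ⟨-U, ?_⟩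
      rw [mul_comm] at hid ⊢
      linear_combination hid
    have hV0 : V = 0 := by
      by_contra hV0
      have := Polynomial.natDegree_le_of_dvd hdvd hV0
      omega
    have hU0 : U = 0 := by
      rw [hV0, zero_mul, add_zero, mul_eq_zero] at hid
      exact hid.resolve_right hfne
    rcases hUV with h | h
    · exact h hU0
    · exact h hV0
  · push_neg at hFD
    have hGD : cG D ≠ 0 := by
      have h1 : bev D cF 0 1 = 0 := by rw [bev_zero_left, hFD]; ring
      have := hroot 0 1 (by simp) h1
      rw [bev_zero_left, one_pow, mul_one] at this
      exact this
    have hgne : g ≠ 0 := uPoly_ne_zero_of_coeff le_rfl hGD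
    have hdg : g.natDegree = D :=
      le_antisymm (uPoly_natDegree_le D cG)
        (Polynomial.le_natDegree_of_ne_zero (by rw [uPoly_coeff D cG le_rfl]; exact hGD))
    have hdvd : g ∣ U := by
      refine IsCoprime.dvd_of_dvd_mul_right hcop.symm ⟨-V, ?_⟩
      rw [mul_comm] at hid ⊢
      linear_combination hid
    have hU0 : U = 0 := by
      by_contra hU0
      have := Polynomial.natDegree_le_of_dvd hdvd hU0
      omega
    have hV0 : V = 0 := by
      rw [hU0, zero_mul, zero_add, mul_eq_zero] at hid
      exact hid.resolve_right hgne
    rcases hUV with h | h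
    · exact h hU0
    · exact h hV0

end TrisecAux
namespace TrisecAux

open MvPolynomial Projectivization

variable {K : Type} [Field K] {n : ℕ}

local notation "MvP" => MvPolynomial (Fin (n+1)) K
local notation "Amb" => (Fin (n+1) → K)

lemma eval_zero_of_homog_pos {f : MvP} {D : ℕ} (hf : f.IsHomogeneous D) (hD : 0 < D) :
    eval (0 : Amb) f = 0 := by
  have : eval (0 : Amb) f = constantCoeff f := by
    rw [MvPolynomial.eval_zero]
  rw [this, constantCoeff_eq]
  exact hf.coeff_eq_zero (by simp [Finsupp.degree]; omega)

lemma homogComp_vanish [Infinite K] {q : MvP} {v : Amb}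
    (h : ∀ c : K, c ≠ 0 → eval (c • v) q = 0) (e : ℕ) :
    eval v (homogeneousComponent e q) = 0 := by
  set c' : ℕ → K := fun e => eval v (homogeneousComponent e q) with hc'
  have hPe : ∀ c : K, c ≠ 0 → (uPoly q.totalDegree c').eval c = 0 := by
    intro c hc
    rw [uPoly_eval, bev]
    have hq : eval (c • v) q = ∑ e ∈ Finset.range (q.totalDegree + 1),
        c ^ e * eval v (homogeneousComponent e q) := by
      conv_lhs => rw [← sum_homogeneousComponent q]
      rw [map_sum]
      refine Finset.sum_congr rfl fun e _ => ?_
      exact eval_homog_smul (homogeneousComponent_isHomogeneous e q) c v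
    rw [← h c hc, hq]
    refine Finset.sum_congr rfl fun j _ => ?_
    rw [one_pow]
    ring
  have hP0 : uPoly q.totalDegree c' = 0 := by
    refine Polynomial.eq_zero_of_infinite_isRoot _ ?_
    refine Set.Infinite.mono ?_ ((Set.finite_singleton (0 : K)).infinite_compl)
    intro c hc
    exact hPe c hc
  by_cases he : e ≤ q.totalDegree
  · have := uPoly_coeff q.totalDegree c' he
    rw [hP0, Polynomial.coeff_zero] at this
    exact this.symm
  · rw [homogeneousComponent_eq_zero _ _ (by omega), map_zero]

/-- **Cones over closed sets are closed.**  For a closed `A ⊆ ℙⁿ` and a point `p ∉ A`,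
the union of the lines joining `p` to points of `A`, together with `p`, is closed. -/
theorem isClosed_coneSet [IsAlgClosed K] [Infinite K] (p : Pn K n) (A : Set (Pn K n))
    (hA : IsClosed A) (hpA : p ∉ A) :
    IsClosed ({x : Pn K n | ∃ y ∈ A, y.rep ∈ Submodule.span K {p.rep, x.rep}} ∪ {p}) := by
  classical
  set S := {x : Pn K n | ∃ y ∈ A, y.rep ∈ Submodule.span K {p.rep, x.rep}} ∪ {p} with hS
  rcases Set.eq_empty_or_nonempty A with hAe | hAne
  · have : S = {p} := by
      rw [hS, hAe]
      ext x; simp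
    rw [this]
    exact isClosed_singleton_pt p
  have hAS : A ⊆ S := by
    intro y hy
    exact Or.inl ⟨y, hy, Submodule.subset_span (by simp)⟩
  rw [← isOpen_compl_iff, isOpen_iff_forall_mem_open]
  intro x₀ hx₀
  have hx₀p : x₀ ≠ p := fun h => hx₀ (Or.inr (by rw [h]; rfl))
  have hx₀c : ∀ y ∈ A, y.rep ∉ Submodule.span K {p.rep, x₀.rep} := by
    intro y hy hsp
    exact hx₀ (Or.inl ⟨y, hy, hsp⟩)
  have hx₀A : x₀ ∉ A := fun h => hx₀ (hAS h)
  -- the basic polynomial vanishing on A and nonzero at p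
  obtain ⟨f₁, d₁, hf₁h, hf₁p, hf₁van⟩ := exists_homog_vanishing hA hpA
  obtain ⟨i₀, hi₀⟩ := Function.ne_iff.mp p.rep_nonzero
  simp only [Pi.zero_apply] at hi₀
  -- the roots parameterizing the "bad" directions
  set cβ : ℕ → K := fun j => eval x₀.rep (bcoef p.rep d₁ f₁ j) with hcβ
  have hcβ0 : cβ 0 ≠ 0 := by
    have h1 : bev d₁ cβ 1 0 = eval ((1:K) • p.rep + (0:K) • x₀.rep) f₁ :=
      bev_bcoef hf₁h p.rep x₀.rep 1 0
    rw [bev_one_zero] at h1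
    rw [h1]
    simpa using hf₁p
  have hfhat_ne : uPoly d₁ cβ ≠ 0 := uPoly_ne_zero_of_coeff (Nat.zero_le d₁) hcβ0
  set βstar : K := -(p.rep i₀) / (x₀.rep i₀) with hβstar
  set Wbad : Set Amb :=
    ((fun β => p.rep + β • x₀.rep) '' {β | (uPoly d₁ cβ).eval β = 0})
      ∪ {x₀.rep, p.rep + βstar • x₀.rep} with hWbad
  have hWfin : Wbad.Finite := by
    refine Set.Finite.union (Set.Finite.image _ ?_) ((Set.finite_singleton _).insert _)
    exact Polynomial.finite_setOf_isRoot hfhat_ne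
  -- for each bad direction, a homogeneous polynomial vanishing on A, nonzero there
  have hWc : ∀ w ∈ Wbad, ∃ (f : MvP) (d : ℕ), f.IsHomogeneous d ∧
      (∀ z ∈ A, eval z.rep f = 0) ∧ eval w f ≠ 0 := by
    intro w hw
    have hwne : w ≠ 0 := by
      rcases hw with ⟨β, _, rfl⟩ | hw
      · exact rep_add_smul_ne_zero hx₀p β
      · rcases hw with rfl | hw
        · exact x₀.rep_nonzero
        · rw [Set.mem_singleton_iff] at hw
          rw [hw]
          exact rep_add_smul_ne_zero hx₀p βstar
    have hwspan : w ∈ Submodule.span K {p.rep, x₀.rep} := by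
      rcases hw with ⟨β, _, rfl⟩ | hw
      · exact Submodule.mem_span_pair.mpr ⟨1, β, by rw [one_smul]⟩
      · rcases hw with rfl | hw
        · exact Submodule.mem_span_pair.mpr ⟨0, 1, by simp⟩
        · rw [Set.mem_singleton_iff] at hw
          rw [hw]
          exact Submodule.mem_span_pair.mpr ⟨1, βstar, by rw [one_smul]⟩
    have hmkA : Projectivization.mk K w hwne ∉ A := by
      intro hmem
      obtain ⟨c, hc, hrep⟩ := rep_mk_smul w hwne
      refine hx₀c _ hmem ?_
      rw [hrep]
      exact Submodule.smul_mem _ c hwspan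
    obtain ⟨f, d, hfh, hfx, hfvan⟩ := exists_homog_vanishing hA hmkA
    refine ⟨f, d, hfh, hfvan, ?_⟩
    intro h0
    exact hfx ((eval_rep_mk_eq_zero_iff hfh hwne).mpr h0)
  choose fw dw hfwh hfwvan hfwne using hWc
  have hWiexists : ∀ w (hw : w ∈ Wbad), ∃ i, w i ≠ 0 := by
    intro w hw
    by_contra h
    push_neg at h
    rcases hw with ⟨β, _, rfl⟩ | hw
    · exact rep_add_smul_ne_zero hx₀p β (funext h)
    · rcases hw with rfl | hw
      · exact x₀.rep_nonzero (funext h)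
      · rw [Set.mem_singleton_iff] at hw
        subst hw
        exact rep_add_smul_ne_zero hx₀p βstar (funext h)
  choose iw hiw using hWiexists
  set Wfin := hWfin.toFinset with hWfinset
  have hmemW : ∀ w : {x // x ∈ Wfin}, (w : Amb) ∈ Wbad :=
    fun w => (Set.Finite.mem_toFinset hWfin).mp w.2
  -- the common degree
  set D : ℕ := max (Wfin.attach.sup (fun w => dw w (hmemW w))) d₁ + 1 with hD
  have hDpos : 0 < D := by omega
  have hd₁D : d₁ < D := by
    have : d₁ ≤ max (Wfin.attach.sup (fun w => dw w (hmemW w))) d₁ := le_max_right _ _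
    omega
  have hdwD : ∀ w : {x // x ∈ Wfin}, dw w (hmemW w) < D := by
    intro w
    have h1 : dw w (hmemW w) ≤ Wfin.attach.sup (fun w => dw w (hmemW w)) :=
      Finset.le_sup (f := fun (w' : {x // x ∈ Wfin}) => dw w'.1 (hmemW w')) (Finset.mem_attach _ w)
    have h2 : Wfin.attach.sup (fun w => dw w (hmemW w))
        ≤ max (Wfin.attach.sup (fun w => dw w (hmemW w))) d₁ := le_max_left _ _
    omega
  -- equalized polynomials
  set f' : MvP := X i₀ ^ (D - d₁) * f₁ with hf'
  have hf'h : f'.IsHomogeneous D := by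
    have := (isHomogeneous_X_pow (R := K) i₀ (D - d₁)).mul hf₁h
    rwa [Nat.sub_add_cancel (le_of_lt hd₁D)] at this
  have hf'van : ∀ z ∈ A, eval z.rep f' = 0 := by
    intro z hz
    rw [hf', map_mul, hf₁van z hz, mul_zero]
  have hf'eval : ∀ v : Amb, eval v f' = (v i₀) ^ (D - d₁) * eval v f₁ := by
    intro v
    rw [hf', map_mul, map_pow, eval_X]
  -- choice of generic coefficients γ
  set val : {x // x ∈ Wfin} → Amb → K :=
    fun w w' => (w' (iw w (hmemW w))) ^ (D - dw w (hmemW w)) * eval w' (fw w (hmemW w))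
    with hval
  have hvaldiag : ∀ w : {x // x ∈ Wfin}, val w (w : Amb) ≠ 0 := by
    intro w
    exact mul_ne_zero (pow_ne_zero _ (hiw w (hmemW w))) (hfwne w (hmemW w))
  have hγ : ∃ γ : {x // x ∈ Wfin} → K,
      ∀ w' : {x // x ∈ Wfin}, (∑ w ∈ Wfin.attach, γ w * val w (w' : Amb)) ≠ 0 := by
    set Q : MvPolynomial {x // x ∈ Wfin} K :=
      ∏ w' ∈ Wfin.attach, (∑ w ∈ Wfin.attach, C (val w (w' : Amb)) * X w) with hQ
    have hfact : ∀ w' : {x // x ∈ Wfin},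
        (∑ w ∈ Wfin.attach, C (val w (w' : Amb)) * X w) ≠ 0 := by
      intro w'
      intro h0
      have := congrArg (coeff (Finsupp.single w' 1)) h0
      rw [coeff_zero] at this
      rw [MvPolynomial.coeff_sum] at this
      rw [Finset.sum_eq_single w'] at this
      · rw [coeff_C_mul, coeff_X'] at this
        rw [if_pos rfl, mul_one] at this
        exact hvaldiag w' this
      · intro w _ hww'
        rw [coeff_C_mul, coeff_X']
        rw [if_neg (fun h => hww' (Finsupp.single_left_injective one_ne_zero h)), mul_zero]
      · intro h
        exact absurd (Finset.mem_attach _ _) h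
    have hQne : Q ≠ 0 := by
      rw [hQ]
      rw [Finset.prod_ne_zero_iff]
      intro w' _
      exact hfact w'
    obtain ⟨γ, hγ⟩ := exists_eval_ne_zero hQne
    refine ⟨γ, fun w' => ?_⟩
    rw [hQ, map_prod] at hγ
    have := Finset.prod_ne_zero_iff.mp hγ w' (Finset.mem_attach _ _)
    rw [map_sum] at this
    have heq : ∀ w ∈ Wfin.attach,
        eval γ (C (val w (w' : Amb)) * X w) = γ w * val w (w' : Amb) := by
      intro w _
      rw [map_mul, eval_C, eval_X]
      ring
    rw [Finset.sum_congr rfl heq] at this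
    exact this
  obtain ⟨γ, hγprop⟩ := hγ
  -- the generic combination G
  set G : MvP := ∑ w ∈ Wfin.attach,
      C (γ w) * (X (iw w (hmemW w)) ^ (D - dw w (hmemW w)) * fw w (hmemW w)) with hG
  have hGh : G.IsHomogeneous D := by
    refine IsHomogeneous.sum _ _ _ fun w _ => ?_
    refine IsHomogeneous.C_mul ?_ _
    have := (isHomogeneous_X_pow (R := K) (iw w (hmemW w)) (D - dw w (hmemW w))).mul
      (hfwh w (hmemW w))
    rwa [Nat.sub_add_cancel (le_of_lt (hdwD w))] at this
  have hGvan : ∀ z ∈ A, eval z.rep G = 0 := by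
    intro z hz
    rw [hG, map_sum]
    refine Finset.sum_eq_zero fun w _ => ?_
    rw [map_mul, map_mul, hfwvan w (hmemW w) z hz, mul_zero, mul_zero]
  have hGeval : ∀ v : Amb, eval v G = ∑ w ∈ Wfin.attach, γ w * val w v := by
    intro v
    rw [hG, map_sum]
    refine Finset.sum_congr rfl fun w _ => ?_
    rw [map_mul, map_mul, map_pow, eval_C, eval_X, hval]
  have hGW : ∀ w' ∈ Wbad, eval w' G ≠ 0 := by
    intro w' hw'
    have hmem : w' ∈ Wfin := (Set.Finite.mem_toFinset hWfin).mpr hw'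
    rw [hGeval]
    exact hγprop ⟨w', hmem⟩
  -- the determinant polynomial
  set g : MvP := (sylv D (fun j => bcoef p.rep D f' j) (fun j => bcoef p.rep D G j)).det
    with hg
  have hgeval : ∀ v : Amb, eval v g
      = (sylv D (fun j => eval v (bcoef p.rep D f' j))
          (fun j => eval v (bcoef p.rep D G j))).det := by
    intro v
    rw [hg, map_sylv_det]
  -- vanishing of g on all scalings of points of S
  have hvan : ∀ x ∈ S, ∀ c : K, c ≠ 0 → eval (c • x.rep) g = 0 := by
    intro x hx c hc
    rw [hgeval]
    rcases hx with hx | hx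
    · obtain ⟨y, hyA, hysp⟩ := hx
      obtain ⟨a, b, hab⟩ := Submodule.mem_span_pair.mp hysp
      have hroot : ∀ (q : MvP), q.IsHomogeneous D → (∀ z ∈ A, eval z.rep q = 0) →
          bev D (fun j => eval (c • x.rep) (bcoef p.rep D q j)) a (b / c) = 0 := by
        intro q hqh hqvan
        rw [bev_bcoef hqh p.rep (c • x.rep) a (b / c)]
        have : a • p.rep + (b / c) • c • x.rep = y.rep := by
          rw [smul_smul, div_mul_cancel₀ _ hc]
          exact hab
        rw [this]
        exact hqvan y hyA
      have habne : ¬(a = 0 ∧ b / c = 0) := by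
        rintro ⟨rfl, hbc⟩
        have hb : b = 0 := by
          have := congrArg (fun t => t * c) hbc
          simpa [div_mul_cancel₀ _ hc] using this
        subst hb
        rw [zero_smul, zero_smul, add_zero] at hab
        exact y.rep_nonzero hab.symm
      exact sylv_det_eq_zero hDpos _ _ habne
        (hroot f' hf'h hf'van) (hroot G hGh hGvan)
    · rw [Set.mem_singleton_iff] at hx
      subst hx
      have hroot : ∀ (q : MvP), q.IsHomogeneous D →
          bev D (fun j => eval (c • x.rep) (bcoef x.rep D q j)) c (-1) = 0 := by
        intro q hqh
        rw [bev_bcoef hqh x.rep (c • x.rep) c (-1)]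
        have : c • x.rep + (-1 : K) • c • x.rep = 0 := by
          rw [neg_smul, one_smul]
          abel
        rw [this]
        exact eval_zero_of_homog_pos hqh hDpos
      exact sylv_det_eq_zero hDpos _ _
        (by rintro ⟨_, h⟩; exact (neg_ne_zero.mpr one_ne_zero) h)
        (hroot f' hf'h) (hroot G hGh)
  -- nonvanishing of g at x₀
  have hgx₀ : eval x₀.rep g ≠ 0 := by
    rw [hgeval]
    set cF : ℕ → K := fun j => eval x₀.rep (bcoef p.rep D f' j) with hcF
    set cG : ℕ → K := fun j => eval x₀.rep (bcoef p.rep D G j) with hcG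
    have hbevF : ∀ a b : K, bev D cF a b = eval (a • p.rep + b • x₀.rep) f' :=
      fun a b => bev_bcoef hf'h p.rep x₀.rep a b
    have hbevG : ∀ a b : K, bev D cG a b = eval (a • p.rep + b • x₀.rep) G :=
      fun a b => bev_bcoef hGh p.rep x₀.rep a b
    have hc0 : cF 0 ≠ 0 := by
      have h1 := hbevF 1 0
      rw [bev_one_zero] at h1
      rw [h1]
      have : (1:K) • p.rep + (0:K) • x₀.rep = p.rep := by simp
      rw [this, hf'eval]
      exact mul_ne_zero (pow_ne_zero _ hi₀) hf₁p
    refine sylv_det_ne_zero hDpos cF cG hc0 ?_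
    intro a b hab hFab
    by_cases ha : a = 0
    · subst ha
      have hb : b ≠ 0 := fun h => hab ⟨rfl, h⟩
      rw [bev_zero_left]
      refine mul_ne_zero ?_ (pow_ne_zero _ hb)
      have h1 := hbevG 0 1
      rw [bev_zero_left, one_pow, mul_one] at h1
      rw [h1]
      have : (0:K) • p.rep + (1:K) • x₀.rep = x₀.rep := by simp
      rw [this]
      exact hGW x₀.rep (Or.inr (by simp))
    · -- a ≠ 0 : pass to the dehomogenization at β = b / a
      set β := b / a with hβ
      have hFβ : eval (p.rep + β • x₀.rep) f' = 0 := by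
        have h2 := bev_eq_pow_mul_eval ha D cF b
        rw [hFab] at h2
        have h3 : (uPoly D cF).eval β = 0 := by
          have := h2.symm
          rcases mul_eq_zero.mp this with h | h
          · exact absurd h (pow_ne_zero _ ha)
          · exact h
        have h4 := uPoly_eval D cF β
        rw [h3, hbevF 1 β, one_smul] at h4
        exact h4.symm
      set w : Amb := p.rep + β • x₀.rep with hw
      have hwW : w ∈ Wbad := by
        rw [hf'eval] at hFβ
        rcases mul_eq_zero.mp hFβ with h | h
        · -- the coordinate i₀ of w vanishes : w is the βstar point
          have hwi₀ : w i₀ = 0 := pow_eq_zero_iff (by omega) |>.mp h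
          have hx₀i₀ : x₀.rep i₀ ≠ 0 := by
            intro h0
            rw [hw] at hwi₀
            simp only [Pi.add_apply, Pi.smul_apply, smul_eq_mul] at hwi₀
            rw [h0, mul_zero, add_zero] at hwi₀
            exact hi₀ hwi₀
          have hβval : β = βstar := by
            rw [hw] at hwi₀
            simp only [Pi.add_apply, Pi.smul_apply, smul_eq_mul] at hwi₀
            rw [hβstar, eq_div_iff hx₀i₀]
            linear_combination hwi₀
          rw [hw, hβval]
          exact Or.inr (Or.inr rfl)
        · -- β is a root of the dehomogenized f₁
          refine Or.inl ⟨β, ?_, rfl⟩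
          have h5 := uPoly_eval d₁ cβ β
          rw [bev_bcoef hf₁h p.rep x₀.rep 1 β, one_smul] at h5
          rw [Set.mem_setOf_eq, h5]
          exact h
      have hGβ : eval w G ≠ 0 := hGW w hwW
      rw [bev_eq_pow_mul_eval ha D cG b]
      refine mul_ne_zero (pow_ne_zero _ ha) ?_
      have h6 := uPoly_eval D cG β
      rw [hbevG 1 β, one_smul] at h6
      rw [← hβ, h6]
      exact hGβ
  -- extract a homogeneous component separating x₀ from S
  have hcompvan : ∀ e, ∀ x ∈ S, eval x.rep (homogeneousComponent e g) = 0 := by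
    intro e x hx
    exact homogComp_vanish (fun c hc => hvan x hx c hc) e
  have hcompne : ∃ e, eval x₀.rep (homogeneousComponent e g) ≠ 0 := by
    by_contra h
    push_neg at h
    apply hgx₀
    conv_lhs => rw [← sum_homogeneousComponent g]
    rw [map_sum]
    exact Finset.sum_eq_zero fun e _ => h e
  obtain ⟨e, he⟩ := hcompne
  refine ⟨{z : Pn K n | eval z.rep (homogeneousComponent e g) ≠ 0}, ?_, ?_, he⟩
  · intro z hz hzS
    exact hz (hcompvan e z hzS)
  · exact isOpen_D (homogeneousComponent_isHomogeneous e g)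

end TrisecAux
namespace TrisecAux

open MvPolynomial Projectivization TopologicalSpace

variable {K : Type} [Field K] {n : ℕ}

local notation "MvP" => MvPolynomial (Fin (n+1)) K
local notation "Amb" => (Fin (n+1) → K)

/-- The homogeneous vanishing ideal of a subset of `ℙⁿ`. -/
noncomputable def idealOf (F : Set (Pn K n)) : Ideal MvP :=
  Ideal.span {f : MvP | (∃ d, f.IsHomogeneous d) ∧ ∀ z ∈ F, eval z.rep f = 0}

lemma idealOf_vanish {B : Set (Pn K n)} {z : Pn K n} (hz : z ∈ B) {f : MvP}
    (hf : f ∈ idealOf B) : eval z.rep f = 0 := by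
  have hle : idealOf B ≤ RingHom.ker (eval (Projectivization.rep z)) :=
    Ideal.span_le.mpr (fun g hg => hg.2 z hz)
  exact RingHom.mem_ker.mp (hle hf)

lemma idealOf_strict_anti {A B : Set (Pn K n)} (hA : IsClosed A) (hAB : A ⊂ B) :
    idealOf B < idealOf A := by
  refine lt_of_le_of_ne (Ideal.span_mono fun g hg => ⟨hg.1, fun z hz => hg.2 z (hAB.1 hz)⟩) ?_
  obtain ⟨x, hxB, hxA⟩ := Set.exists_of_ssubset hAB
  obtain ⟨g, d, hgh, hgx, hgvan⟩ := exists_homog_vanishing hA hxA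
  intro heq
  have hg : g ∈ idealOf A := Ideal.subset_span ⟨⟨d, hgh⟩, hgvan⟩
  rw [← heq] at hg
  exact hgx (idealOf_vanish hxB hg)

lemma wf_closed : WellFounded (fun A B : Set (Pn K n) => IsClosed A ∧ A ⊂ B) := by
  have hwf : WellFounded ((· > ·) : Ideal MvP → Ideal MvP → Prop) := wellFounded_gt
  refine Subrelation.wf (r := InvImage (· > ·) (idealOf (K := K) (n := n))) ?_
    (InvImage.wf _ hwf)
  intro A B h
  exact idealOf_strict_anti h.1 h.2

lemma ssubset_inter_of_not_subset {A z : Set (Pn K n)} (h : ¬ A ⊆ z) : A ∩ z ⊂ A :=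
  ⟨Set.inter_subset_left, fun hsub =>
    h (fun x hx => ((hsub hx).2 : x ∈ z))⟩

set_option synthInstance.maxHeartbeats 1000000 in
/-- **Chain-building lemma.** If every line of `ℙ(W)` through `p` meets the closed set
`A ⊆ ℙ(W)` (and `p ∉ A`), then `A` contains a strictly increasing chain of `m+1`
irreducible closed subsets, where `finrank W = m+2`. -/
theorem chain_lemma [IsAlgClosed K] [Infinite K] (m : ℕ) :
    ∀ (W : Submodule K Amb), Module.finrank K ↥W = m + 2 →
    ∀ (p : Pn K n), p.rep ∈ W →
    ∀ (A : Set (Pn K n)), IsClosed A → A ⊆ projLinear K W → p ∉ A →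
    (∀ x : Pn K n, x.rep ∈ W → x ≠ p →
      ∃ y ∈ A, y.rep ∈ Submodule.span K {p.rep, x.rep}) →
    ∃ c : Fin (m+1) → Set (Pn K n),
      (∀ i, IsIrreducible (c i) ∧ IsClosed (c i) ∧ c i ⊆ A) ∧
      (∀ i j : Fin (m+1), i < j → c i ⊂ c j) := by
  induction m with
  | zero =>
      intro W hW p hp A hA hAW hpA hcov
      obtain ⟨x, hxW, hxp⟩ := exists_point_ne (W := W) (by rw [hW]) p
      obtain ⟨y, hyA, _⟩ := hcov x hxW hxp
      refine ⟨fun _ => {y}, fun i =>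
        ⟨isIrreducible_singleton, isClosed_singleton_pt y, by simpa using hyA⟩,
        fun i j hij => ?_⟩
      have h1 : (i : ℕ) < (j : ℕ) := hij
      have h2 := j.isLt
      omega
  | succ m ih =>
      intro W hW p hp A₀ hA₀ hAW₀ hpA₀ hcov₀
      induction A₀ using wf_closed.induction with
      | _ A IH =>
      by_cases hpre : IsPreirreducible A
      · -- A is irreducible: cut by a hyperplane through p and recurse in dimension
        obtain ⟨x, hxW, hxp⟩ := exists_point_ne (W := W) (by rw [hW]; omega) p
        obtain ⟨y₀, hy₀A, _⟩ := hcov₀ x hxW hxp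
        have hy₀p : y₀ ≠ p := fun h => hpA₀ (h ▸ hy₀A)
        have hy₀W : y₀.rep ∈ W := hAW₀ hy₀A
        have hy₀span : y₀.rep ∉ Submodule.span K {p.rep} := by
          intro hsp
          obtain ⟨cc, hcc⟩ := Submodule.mem_span_singleton.mp hsp
          have hccne : cc ≠ 0 := by
            intro h; rw [h, zero_smul] at hcc; exact y₀.rep_nonzero hcc.symm
          apply hy₀p
          have := mk_eq_of_smul y₀.rep_nonzero p.rep_nonzero hcc
          rwa [Projectivization.mk_rep, Projectivization.mk_rep] at this
        obtain ⟨φ, hφ0, hφy₀⟩ := exists_dual hy₀span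
        have hφp : φ p.rep = 0 := hφ0 p.rep (Submodule.mem_span_singleton_self _)
        set W' : Submodule K Amb := W ⊓ LinearMap.ker φ with hW'
        have hpW' : p.rep ∈ W' := ⟨hp, hφp⟩
        -- rank computation
        have hrk : Module.finrank K ↥W' = m + 2 := by
          have hrange : Module.finrank K ↥(LinearMap.range (φ.domRestrict W)) = 1 := by
            have hle : Module.finrank K ↥(LinearMap.range (φ.domRestrict W)) ≤ 1 := by
              have := Submodule.finrank_le (LinearMap.range (φ.domRestrict W))
              simpa using this
            have hne : LinearMap.range (φ.domRestrict W) ≠ ⊥ := by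
              intro hbot
              have : φ.domRestrict W ⟨y₀.rep, hy₀W⟩ = 0 := by
                have : φ.domRestrict W ⟨y₀.rep, hy₀W⟩ ∈ (⊥ : Submodule K K) := by
                  rw [← hbot]; exact LinearMap.mem_range_self _ _
                simpa using this
              exact hφy₀ this
            have hpos : Module.finrank K ↥(LinearMap.range (φ.domRestrict W)) ≠ 0 := by
              intro h0
              exact hne (Submodule.finrank_eq_zero.mp h0)
            omega
          have hrn := LinearMap.finrank_range_add_finrank_ker (φ.domRestrict W)
          rw [hrange, hW] at hrn
          have hker : LinearMap.ker (φ.domRestrict W)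
              = Submodule.comap W.subtype (W ⊓ LinearMap.ker φ) := by
            ext w
            simp only [LinearMap.mem_ker, LinearMap.domRestrict_apply, Submodule.mem_comap,
              Submodule.subtype_apply, Submodule.mem_inf]
            exact ⟨fun h => ⟨w.2, h⟩, fun h => h.2⟩
          have hequiv : Module.finrank K ↥(Submodule.comap W.subtype (W ⊓ LinearMap.ker φ))
              = Module.finrank K ↥(W ⊓ LinearMap.ker φ) :=
            LinearEquiv.finrank_eq (Submodule.comapSubtypeEquivOfLe inf_le_left)
          rw [hker, hequiv] at hrn
          rw [hW']
          omega
        set A' := A ∩ projLinear K W' with hA'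
        have hAnotW' : ¬ A ⊆ projLinear K W' := by
          intro hsub
          exact hφy₀ ((hsub hy₀A).2)
        have hA'ss : A' ⊂ A := ssubset_inter_of_not_subset hAnotW'
        obtain ⟨c', hc'props, hc'mono⟩ := ih W' hrk p hpW'
          A' (hA₀.inter (isClosed_projLinear W')) Set.inter_subset_right
          (fun h => hpA₀ h.1)
          (by
            intro x hxW' hxp
            obtain ⟨y, hyA, hyspan⟩ := hcov₀ x (hxW'.1) hxp
            refine ⟨y, ⟨hyA, ?_⟩, hyspan⟩
            have hsple : Submodule.span K {p.rep, x.rep} ≤ W' := by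
              rw [Submodule.span_le]
              rintro v (rfl | rfl)
              · exact hpW'
              · exact hxW'
            exact hsple hyspan)
        -- append A itself
        refine ⟨Fin.snoc c' A, ?_, ?_⟩
        · intro i
          refine Fin.lastCases ?_ (fun i' => ?_) i
          · rw [Fin.snoc_last]
            exact ⟨⟨⟨y₀, hy₀A⟩, hpre⟩, hA₀, subset_rfl⟩
          · rw [Fin.snoc_castSucc]
            obtain ⟨h1, h2, h3⟩ := hc'props i'
            exact ⟨h1, h2, h3.trans hA'ss.1⟩
        · intro i j
          refine Fin.lastCases ?_ (fun j' => ?_) j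
          · intro hij'
            have hinel : i ≠ Fin.last _ := Fin.ne_last_of_lt hij'
            obtain ⟨i', rfl⟩ := Fin.exists_castSucc_eq.mpr hinel
            rw [Fin.snoc_castSucc, Fin.snoc_last]
            exact lt_of_le_of_lt (hc'props i').2.2 hA'ss
          · intro hij'
            have hinel : i ≠ Fin.last _ := Fin.ne_last_of_lt (lt_of_lt_of_le hij'
              (le_of_lt (Fin.castSucc_lt_last j')))
            obtain ⟨i', rfl⟩ := Fin.exists_castSucc_eq.mpr hinel
            rw [Fin.snoc_castSucc, Fin.snoc_castSucc]
            exact hc'mono i' j' (by exact_mod_cast hij')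
      · -- A is reducible: split into two smaller closed pieces and use the cones
        rw [isPreirreducible_iff_isClosed_union_isClosed] at hpre
        push_neg at hpre
        obtain ⟨z₁, z₂, hz₁, hz₂, hAsub, hns₁, hns₂⟩ := hpre
        have hWbot : W ≠ ⊥ := by
          intro h
          rw [h] at hW
          simp at hW
        have hLirr := projLinear_irreducible (K := K) (n := n) hWbot
        have hkey : ∀ B : Set (Pn K n), IsClosed B → B ⊂ A →
            projLinear K W ⊆ ({x : Pn K n | ∃ y ∈ B,
              y.rep ∈ Submodule.span K {p.rep, x.rep}} ∪ {p}) →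
            ∃ c : Fin (m+1+1) → Set (Pn K n),
              (∀ i, IsIrreducible (c i) ∧ IsClosed (c i) ∧ c i ⊆ A) ∧
              (∀ i j : Fin (m+1+1), i < j → c i ⊂ c j) := by
          intro B hB hBA hcone
          obtain ⟨c, hcp, hcm⟩ := IH B ⟨hB, hBA⟩ hB (hBA.1.trans hAW₀)
            (fun h => hpA₀ (hBA.1 h))
            (by
              intro x hxW hxp
              rcases hcone (show x ∈ projLinear K W from hxW) with hx | hx
              · exact hx
              · exact absurd (Set.mem_singleton_iff.mp hx) hxp)
          exact ⟨c, fun i => ⟨(hcp i).1, (hcp i).2.1, (hcp i).2.2.trans hBA.1⟩, hcm⟩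
        set A₁ := A ∩ z₁ with hA₁
        set A₂ := A ∩ z₂ with hA₂
        have hA₁c : IsClosed A₁ := hA₀.inter hz₁
        have hA₂c : IsClosed A₂ := hA₀.inter hz₂
        have hA₁ss : A₁ ⊂ A := ssubset_inter_of_not_subset hns₁
        have hA₂ss : A₂ ⊂ A := ssubset_inter_of_not_subset hns₂
        have hS₁ := isClosed_coneSet p A₁ hA₁c (fun h => hpA₀ h.1)
        have hS₂ := isClosed_coneSet p A₂ hA₂c (fun h => hpA₀ h.1)
        have hcover : projLinear K W ⊆
            ({x : Pn K n | ∃ y ∈ A₁, y.rep ∈ Submodule.span K {p.rep, x.rep}} ∪ {p})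
            ∪ ({x : Pn K n | ∃ y ∈ A₂, y.rep ∈ Submodule.span K {p.rep, x.rep}} ∪ {p}) := by
          intro x hxL
          by_cases hxp : x = p
          · exact Or.inl (Or.inr (by rw [hxp]; rfl))
          · obtain ⟨y, hyA, hyspan⟩ := hcov₀ x hxL hxp
            rcases hAsub hyA with hy1 | hy2
            · exact Or.inl (Or.inl ⟨y, ⟨hyA, hy1⟩, hyspan⟩)
            · exact Or.inr (Or.inl ⟨y, ⟨hyA, hy2⟩, hyspan⟩)
        have := (isPreirreducible_iff_isClosed_union_isClosed.mp hLirr.2) _ _ hS₁ hS₂ hcover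
        rcases this with h | h
        · exact hkey A₁ hA₁c hA₁ss h
        · exact hkey A₂ hA₂c hA₂ss h

end TrisecAux
namespace TrisecAux

open MvPolynomial Projectivization TopologicalSpace

variable {K : Type} [Field K] {n : ℕ}

local notation "MvP" => MvPolynomial (Fin (n+1)) K
local notation "Amb" => (Fin (n+1) → K)

/-- A strictly increasing chain of `m+1` irreducible closed subsets inside `Y`
forces `sdim Y ≥ m`. -/
lemma le_sdim_of_chain {Y : Set (Pn K n)} {m : ℕ} (c : Fin (m+1) → Set (Pn K n))
    (hc : ∀ i, IsIrreducible (c i) ∧ IsClosed (c i) ∧ c i ⊆ Y)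
    (hmono : ∀ i j : Fin (m+1), i < j → c i ⊂ c j) :
    ((m : ℕ) : WithBot ℕ∞) ≤ sdim Y := by
  have hirr : ∀ i, IsIrreducible (Subtype.val ⁻¹' (c i) : Set ↥Y) := by
    intro i
    obtain ⟨hne, hpre⟩ := (hc i).1
    obtain ⟨x, hx⟩ := hne
    refine ⟨⟨⟨x, (hc i).2.2 hx⟩, hx⟩, ?_⟩
    intro U V hU hV hUne hVne
    obtain ⟨u, huc, huU⟩ := hUne
    obtain ⟨v, hvc, hvV⟩ := hVne
    obtain ⟨U₀, hU₀, rfl⟩ := isOpen_induced_iff.mp hU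
    obtain ⟨V₀, hV₀, rfl⟩ := isOpen_induced_iff.mp hV
    obtain ⟨z, hz⟩ := hpre U₀ V₀ hU₀ hV₀ ⟨u.val, huc, huU⟩ ⟨v.val, hvc, hvV⟩
    exact ⟨⟨z, (hc i).2.2 hz.1⟩, hz.1, hz.2.1, hz.2.2⟩
  have hcl : ∀ i, IsClosed (Subtype.val ⁻¹' (c i) : Set ↥Y) :=
    fun i => (hc i).2.1.preimage continuous_subtype_val
  set E : Fin (m+1) → IrreducibleCloseds ↥Y :=
    fun i => ⟨Subtype.val ⁻¹' (c i), hirr i, hcl i⟩ with hE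
  have hstrict : ∀ i j, i < j → E i < E j := by
    intro i j hij
    have hss := hmono i j hij
    show (Subtype.val ⁻¹' (c i) : Set ↥Y) ⊂ Subtype.val ⁻¹' (c j)
    obtain ⟨x, hxj, hxi⟩ := Set.exists_of_ssubset hss
    refine ⟨Set.preimage_mono hss.1, fun h => hxi ?_⟩
    exact h (show (⟨x, (hc j).2.2 hxj⟩ : ↥Y) ∈ Subtype.val ⁻¹' (c j) from hxj)
  set P : LTSeries (IrreducibleCloseds ↥Y) :=
    ⟨m, E, fun i => hstrict _ _ (Fin.castSucc_lt_succ (i := i))⟩ with hP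
  exact Order.LTSeries.length_le_krullDim P

/-- An irreducible set of dimension `≤ 0` is a singleton (given two points, they agree). -/
lemma eq_of_sdim_le_zero {Yi : Set (Pn K n)} (hcl : IsClosed Yi) (hirr : IsIrreducible Yi)
    (hdim : sdim Yi ≤ ((0 : ℕ) : WithBot ℕ∞)) :
    ∀ a ∈ Yi, ∀ b ∈ Yi, a = b := by
  intro a ha b hb
  by_contra hab
  have hchain := le_sdim_of_chain (Y := Yi) (m := 1) ![{a}, Yi]
    (by
      intro i
      refine Fin.cases ?_ (fun i' => ?_) i
      · exact ⟨isIrreducible_singleton, isClosed_singleton_pt a, Set.singleton_subset_iff.mpr ha⟩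
      · simp only [Matrix.cons_val_succ]
        have : i' = 0 := Subsingleton.elim _ _
        rw [this]
        exact ⟨hirr, hcl, by simp⟩)
    (by
      intro i j hij
      have h1 : (i : ℕ) < (j : ℕ) := hij
      have h2 := j.isLt
      have hi0 : i = 0 := Fin.ext (by simp; omega)
      have hj1 : j = 1 := Fin.ext (by simp; omega)
      subst hi0; subst hj1
      simp only [Matrix.cons_val_zero, Matrix.cons_val_one, Matrix.head_cons]
      exact ⟨Set.singleton_subset_iff.mpr ha, fun h => hab ((Set.mem_singleton_iff.mp (h hb)).symm)⟩)
  have hle : ((1 : ℕ) : WithBot ℕ∞) ≤ ((0 : ℕ) : WithBot ℕ∞) := le_trans hchain hdim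
  norm_num at hle

end TrisecAux

/-- **Trisecant-lemma paper, Lemma (intersection components).** Let `Y₁ ≠ Y₂` be irreducible
closed varieties in `ℙⁿ` of codimension at least `2`, `Y` a third irreducible closed variety of
codimension at least `2`, and `Z` an irreducible component of `Y₁ ∩ Y₂` (so `Δ(Z)` is an
intersection component of `J(Y₁,Y₂) = Δ(Y₁) ∩ Δ(Y₂)`). If `Δ(Z) ⊆ Δ(Y)` then `Z ⊆ Y`. -/
theorem intersection_component_delta_subset
    (K : Type) [Field K] [IsAlgClosed K] [CharZero K]
    (n : ℕ) (Y₁ Y₂ Y : Set (Pn K n))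
    (h₁cl : IsClosed Y₁) (h₁irr : IsIrreducible Y₁)
    (h₁codim : sdim Y₁ ≤ ((n - 2 : ℕ) : WithBot ℕ∞))
    (h₂cl : IsClosed Y₂) (h₂irr : IsIrreducible Y₂)
    (h₂codim : sdim Y₂ ≤ ((n - 2 : ℕ) : WithBot ℕ∞))
    (hne : Y₁ ≠ Y₂)
    (hYcl : IsClosed Y) (hYirr : IsIrreducible Y)
    (hYcodim : sdim Y ≤ ((n - 2 : ℕ) : WithBot ℕ∞))
    (Z : Set (Pn K n)) (hZ : IsIrredCompOf Z (Y₁ ∩ Y₂))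
    (hΔ : Delta K Z ⊆ Delta K Y) :
    Z ⊆ Y := by
  classical
  have hZne : Z.Nonempty := hZ.2.1.1
  have hZsub : Z ⊆ Y₁ ∩ Y₂ := hZ.1
  rcases Nat.lt_or_ge n 1 with hn0 | hn1
  · -- `n = 0` : impossible since `Y₁ ≠ Y₂` in the one-point space `ℙ⁰`
    exfalso
    have hn : n = 0 := by omega
    subst hn
    have hsub : ∀ a b : Pn K 0, a = b := by
      intro a b
      have ha := a.rep_nonzero
      have hb := b.rep_nonzero
      have hb0 : b.rep 0 ≠ 0 := by
        intro h
        apply hb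
        funext i
        rw [Fin.eq_zero i]
        exact h
      have hcb : (a.rep 0 / b.rep 0) • b.rep = a.rep := by
        funext i
        rw [Fin.eq_zero i]
        simp only [Pi.smul_apply, smul_eq_mul]
        rw [div_mul_cancel₀ _ hb0]
      have := TrisecAux.mk_eq_of_smul ha hb hcb
      rwa [Projectivization.mk_rep, Projectivization.mk_rep] at this
    obtain ⟨y₁, hy₁⟩ := h₁irr.1
    obtain ⟨y₂, hy₂⟩ := h₂irr.1
    exact hne (Set.ext fun w => ⟨fun _ => (hsub w y₂) ▸ hy₂, fun _ => (hsub w y₁) ▸ hy₁⟩)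
  rcases Nat.lt_or_ge n 2 with hn1' | hn2
  · -- `n = 1` : `Y₁` and `Y₂` are distinct points, so `Z ⊆ Y₁ ∩ Y₂ = ∅` is impossible
    exfalso
    have hn : n = 1 := by omega
    subst hn
    obtain ⟨z, hz⟩ := hZne
    have hz12 := hZsub hz
    have h1 : ∀ a ∈ Y₁, ∀ b ∈ Y₁, a = b :=
      TrisecAux.eq_of_sdim_le_zero h₁cl h₁irr h₁codim
    have h2 : ∀ a ∈ Y₂, ∀ b ∈ Y₂, a = b :=
      TrisecAux.eq_of_sdim_le_zero h₂cl h₂irr h₂codim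
    refine hne (Set.ext fun w => ⟨fun hw => ?_, fun hw => ?_⟩)
    · rw [h1 w hw z hz12.1]; exact hz12.2
    · rw [h2 w hw z hz12.2]; exact hz12.1
  -- main case `n ≥ 2`
  intro p hpZ
  by_contra hpY
  have hcov : ∀ x : Pn K n, x.rep ∈ (⊤ : Submodule K (Fin (n+1) → K)) → x ≠ p →
      ∃ y ∈ Y, y.rep ∈ Submodule.span K {p.rep, x.rep} := by
    intro x _ hxp
    have hline : IsLine K (projLinear K (Submodule.span K {p.rep, x.rep})) :=
      ⟨_, TrisecAux.finrank_span_pair hxp, rfl⟩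
    have hplmem : p ∈ projLinear K (Submodule.span K {p.rep, x.rep}) :=
      Submodule.subset_span (Set.mem_insert _ _)
    have hlZ : (⟨_, hline⟩ : Grass K n) ∈ Delta K Z := ⟨p, hplmem, hpZ⟩
    obtain ⟨y, hyl, hyY⟩ := hΔ hlZ
    exact ⟨y, hyY, hyl⟩
  have hrank : Module.finrank K ↥(⊤ : Submodule K (Fin (n+1) → K)) = (n - 2 + 1) + 2 := by
    rw [finrank_top]
    have hpi : Module.finrank K (Fin (n+1) → K) = n + 1 := by simp
    omega
  obtain ⟨c, hcp, hcm⟩ := TrisecAux.chain_lemma (n - 2 + 1) ⊤ hrank p trivial Y hYcl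
    (fun y _ => trivial) hpY hcov
  have hchain := TrisecAux.le_sdim_of_chain c hcp hcm
  have hle : ((n - 2 + 1 : ℕ) : WithBot ℕ∞) ≤ ((n - 2 : ℕ) : WithBot ℕ∞) :=
    le_trans hchain hYcodim
  rw [← WithBot.coe_natCast (n - 2 + 1), ← WithBot.coe_natCast (n - 2)] at hle
  have hfin := Nat.cast_le.mp (WithBot.coe_le_coe.mp hle)
  omega
end

section
/- Over an algebraically closed field K of characteristic p > 0, the curve in ℙ³ defined by the homogeneous ideal ⟨yᵖ − z·t^{p−1}, xᵖ − y·t^{p−1}⟩ ⊆ K[x,y,z,t] has the property that the embedded tangent spaces at all its smooth points contain one and the same point at infinity (any two tangent lines are parallel in the affine chart t ≠ 0), yet the curve is not a line. In particular, the statement 'if a fixed linear space L of dimension dim(X) − 1 is contained in T_p(X) for all p in a dense open set then X is linear' fails in positive characteristic. -/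
/-!
Common framework: projective space over a field `K` with its Zariski topology,
lines, the Grassmannian `𝔾(1,n)` of lines (with the quotient Zariski topology
coming from the Stiefel-style parametrization by pairs of independent vectors),
the incidence variety `Δ(X)`, dimension of a subvariety as the topological Krull
dimension of the corresponding subspace, irreducible components, dense open
subsets, embedded projective tangent spaces, joins and (tri)secant varieties.
-/

open MvPolynomial
open scoped LinearAlgebra.Projectivization

namespace CE
open Projectivization

variable {K : Type} [Field K]

lemma eval_smul_of_isHomogeneous {σ : Type*} {f : MvPolynomial σ K} {d : ℕ}
    (hf : f.IsHomogeneous d) (c : K) (w : σ → K) :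
    eval (c • w) f = c ^ d * eval w f := by
  rw [eval_eq, eval_eq, Finset.mul_sum]
  refine Finset.sum_congr rfl fun m hm => ?_
  rw [mem_support_iff] at hm
  have hdeg : ∑ i ∈ m.support, m i = d := by
    have h := hf hm
    rw [Finsupp.weight_apply] at h
    simpa [Finsupp.sum] using h
  have : ∏ i ∈ m.support, (c • w) i ^ m i
      = c ^ d * ∏ i ∈ m.support, w i ^ m i := by
    simp only [Pi.smul_apply, smul_eq_mul, mul_pow, Finset.prod_mul_distrib,
      Finset.prod_pow_eq_pow_sum, hdeg]
  rw [this]; ring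

/-- The homogeneous parametrization of the curve. -/
def Pw (p : ℕ) (w : Fin 2 → K) : Fin 4 → K :=
  ![w 1 * w 0 ^ (p ^ 2 - 1), w 1 ^ p * w 0 ^ (p ^ 2 - p), w 1 ^ p ^ 2, w 0 ^ p ^ 2]

noncomputable def Pv (p : ℕ) : Fin 4 → MvPolynomial (Fin 2) K :=
  ![X 1 * X 0 ^ (p ^ 2 - 1), X 1 ^ p * X 0 ^ (p ^ 2 - p), X 1 ^ p ^ 2, X 0 ^ p ^ 2]

lemma eval_Pv (p : ℕ) (w : Fin 2 → K) (i : Fin 4) :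
    eval w (Pv p i) = Pw p w i := by
  fin_cases i <;> simp [Pv, Pw]

lemma hp_facts {p : ℕ} (hp : 1 ≤ p) : 1 ≤ p ^ 2 ∧ p ≤ p ^ 2 :=
  ⟨Nat.one_le_pow _ _ hp, by nlinarith⟩

lemma Pv_isHomogeneous {p : ℕ} (hp : 1 ≤ p) (i : Fin 4) :
    (Pv (K := K) p i).IsHomogeneous (p ^ 2) := by
  obtain ⟨h1, h2⟩ := hp_facts hp
  fin_cases i
  · have h := (isHomogeneous_X K (1 : Fin 2)).mul (isHomogeneous_X_pow (0 : Fin 2) (p ^ 2 - 1))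
    rw [show 1 + (p ^ 2 - 1) = p ^ 2 by omega] at h
    simpa [Pv] using h
  · have h := (isHomogeneous_X_pow (R := K) (1 : Fin 2) p).mul
      (isHomogeneous_X_pow (0 : Fin 2) (p ^ 2 - p))
    rw [show p + (p ^ 2 - p) = p ^ 2 by omega] at h
    simpa [Pv] using h
  · simpa [Pv] using isHomogeneous_X_pow (R := K) (1 : Fin 2) (p ^ 2)
  · simpa [Pv] using isHomogeneous_X_pow (R := K) (0 : Fin 2) (p ^ 2)

lemma Pw_smul {p : ℕ} (hp : 1 ≤ p) (c : K) (w : Fin 2 → K) :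
    Pw p (c • w) = c ^ p ^ 2 • Pw p w := by
  obtain ⟨h1, h2⟩ := hp_facts hp
  have e1 : c * c ^ (p ^ 2 - 1) = c ^ p ^ 2 := by
    rw [← pow_succ']; congr 1; omega
  have e2 : c ^ p * c ^ (p ^ 2 - p) = c ^ p ^ 2 := by
    rw [← pow_add]; congr 1; omega
  funext i
  fin_cases i <;> simp [Pw, mul_pow]
  · linear_combination (w 1 * w 0 ^ (p ^ 2 - 1)) * e1
  · linear_combination (w 1 ^ p * w 0 ^ (p ^ 2 - p)) * e2

end CE
namespace CE
variable {K : Type} [Field K]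
open Projectivization

/-- the two defining polynomials -/
noncomputable def f₁ (K : Type) [Field K] (p : ℕ) : MvPolynomial (Fin 4) K :=
  X 1 ^ p - X 2 * X 3 ^ (p - 1)

noncomputable def f₂ (K : Type) [Field K] (p : ℕ) : MvPolynomial (Fin 4) K :=
  X 0 ^ p - X 1 * X 3 ^ (p - 1)

/-- The curve. -/
def Curve (K : Type) [Field K] (p : ℕ) : Set (Pn K 3) :=
  {x | eval x.rep (f₁ K p) = 0 ∧ eval x.rep (f₂ K p) = 0}

lemma f₁_isHomogeneous {p : ℕ} (hp : 1 ≤ p) : (f₁ K p).IsHomogeneous p := by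
  have h := (isHomogeneous_X K (2 : Fin 4)).mul (isHomogeneous_X_pow (3 : Fin 4) (p - 1))
  rw [show 1 + (p - 1) = p by omega] at h
  exact (isHomogeneous_X_pow (1 : Fin 4) p).sub h

lemma f₂_isHomogeneous {p : ℕ} (hp : 1 ≤ p) : (f₂ K p).IsHomogeneous p := by
  have h := (isHomogeneous_X K (1 : Fin 4)).mul (isHomogeneous_X_pow (3 : Fin 4) (p - 1))
  rw [show 1 + (p - 1) = p by omega] at h
  exact (isHomogeneous_X_pow (0 : Fin 4) p).sub h

lemma eval_f₁ (p : ℕ) (v : Fin 4 → K) :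
    eval v (f₁ K p) = v 1 ^ p - v 2 * v 3 ^ (p - 1) := by simp [f₁]

lemma eval_f₂ (p : ℕ) (v : Fin 4 → K) :
    eval v (f₂ K p) = v 0 ^ p - v 1 * v 3 ^ (p - 1) := by simp [f₂]

lemma eval_Pw_f₁ {p : ℕ} (hp : 1 ≤ p) (w : Fin 2 → K) : eval (Pw p w) (f₁ K p) = 0 := by
  obtain ⟨h1, h2⟩ := hp_facts hp
  rw [eval_f₁]
  show (w 1 ^ p * w 0 ^ (p ^ 2 - p)) ^ p - w 1 ^ p ^ 2 * (w 0 ^ p ^ 2) ^ (p - 1) = 0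
  rw [mul_pow, ← pow_mul, ← pow_mul, ← pow_mul,
    show (p ^ 2 - p) * p = p ^ 2 * (p - 1) by
      rw [Nat.sub_mul, Nat.mul_sub, mul_one, show p * p = p ^ 2 by ring],
    show p * p = p ^ 2 by ring]
  ring

lemma eval_Pw_f₂ {p : ℕ} (hp : 1 ≤ p) (w : Fin 2 → K) : eval (Pw p w) (f₂ K p) = 0 := by
  obtain ⟨h1, h2⟩ := hp_facts hp
  rw [eval_f₂]
  show (w 1 * w 0 ^ (p ^ 2 - 1)) ^ p - w 1 ^ p * w 0 ^ (p ^ 2 - p) * (w 0 ^ p ^ 2) ^ (p - 1) = 0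
  rw [mul_pow, ← pow_mul, ← pow_mul, mul_assoc, ← pow_add,
    show (p ^ 2 - 1) * p = p ^ 2 - p + p ^ 2 * (p - 1) by
      rw [Nat.sub_mul, Nat.mul_sub, one_mul, mul_one]
      have h4 : p ^ 2 ≤ p ^ 2 * p := Nat.le_mul_of_pos_right _ (by omega)
      have h5 : p ≤ p ^ 2 * p := le_trans h2 h4
      omega]
  ring

lemma Pw_ne_zero {p : ℕ} (hp : 1 ≤ p) {w : Fin 2 → K} (hw : ¬ (w 0 = 0 ∧ w 1 = 0)) :
    Pw p w ≠ 0 := by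
  obtain ⟨h1, h2⟩ := hp_facts hp
  intro h
  by_cases h0 : w 0 = 0
  · have h1' : w 1 ≠ 0 := fun h1' => hw ⟨h0, h1'⟩
    have := congrFun h 2
    simp only [Pw, Matrix.cons_val_two, Matrix.tail_cons, Matrix.head_cons, Pi.zero_apply] at this
    exact h1' ((pow_eq_zero_iff (show p ^ 2 ≠ 0 by omega)).mp this)
  · have := congrFun h 3
    simp only [Pw, Matrix.cons_val_three, Matrix.cons_val_two, Matrix.tail_cons,
      Matrix.head_cons, Pi.zero_apply] at this
    exact h0 ((pow_eq_zero_iff (show p ^ 2 ≠ 0 by omega)).mp this)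

lemma Pw_eq_zero {p : ℕ} (hp : 1 ≤ p) {w : Fin 2 → K} (h0 : w 0 = 0) (h1 : w 1 = 0) :
    Pw p w = 0 := by
  obtain ⟨hh1, hh2⟩ := hp_facts hp
  have hp0 : p ≠ 0 := by omega
  have hp2 : p ^ 2 ≠ 0 := by omega
  funext i
  fin_cases i <;> simp [Pw, h0, h1, zero_pow hp0, zero_pow hp2]

/-- the rep of a mk is a unit multiple -/
lemma eval_rep_mk_eq_zero_iff {v : Fin 4 → K} (hv : v ≠ 0) {f : MvPolynomial (Fin 4) K}
    {d : ℕ} (hf : f.IsHomogeneous d) :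
    eval (Projectivization.mk K v hv).rep f = 0 ↔ eval v f = 0 := by
  obtain ⟨a, ha⟩ := Projectivization.exists_smul_eq_mk_rep K v hv
  rw [← ha]
  have : (a : K) • v = ((a : K) • v : Fin 4 → K) := rfl
  rw [show ((a • v : Fin 4 → K)) = ((a : K) • v) from rfl,
    eval_smul_of_isHomogeneous hf]
  simp [a.ne_zero]

lemma mk_Pw_mem_Curve {p : ℕ} (hp : 1 ≤ p) {w : Fin 2 → K} (hw : Pw p w ≠ 0) :
    Projectivization.mk K (Pw p w) hw ∈ Curve K p :=
  ⟨(eval_rep_mk_eq_zero_iff hw (f₁_isHomogeneous hp)).mpr (eval_Pw_f₁ hp w),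
   (eval_rep_mk_eq_zero_iff hw (f₂_isHomogeneous hp)).mpr (eval_Pw_f₂ hp w)⟩

end CE
namespace CE
variable {K : Type} [Field K]
open Projectivization

lemma rep_param [IsAlgClosed K] {p : ℕ} (hp : 2 ≤ p) {x : Pn K 3} (hx : x ∈ Curve K p) :
    ∃ w : Fin 2 → K, x.rep = Pw p w := by
  obtain ⟨h1, h2⟩ := hp_facts (show 1 ≤ p by omega)
  have ha : x.rep 0 ^ p = x.rep 1 * x.rep 3 ^ (p - 1) := by
    have := hx.2; rw [eval_f₂] at this; exact sub_eq_zero.mp this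
  have hb : x.rep 1 ^ p = x.rep 2 * x.rep 3 ^ (p - 1) := by
    have := hx.1; rw [eval_f₁] at this; exact sub_eq_zero.mp this
  by_cases h3 : x.rep 3 = 0
  · -- point at infinity
    have hb0 : x.rep 1 = 0 := by
      have : x.rep 1 ^ p = 0 := by rw [hb, h3, zero_pow (show p - 1 ≠ 0 by omega), mul_zero]
      exact (pow_eq_zero_iff (show p ≠ 0 by omega)).mp this
    have ha0 : x.rep 0 = 0 := by
      have : x.rep 0 ^ p = 0 := by rw [ha, hb0, zero_mul]
      exact (pow_eq_zero_iff (show p ≠ 0 by omega)).mp this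
    obtain ⟨s, hs⟩ := IsAlgClosed.exists_pow_nat_eq (x.rep 2) (show 0 < p ^ 2 by omega)
    have h4 : 4 ≤ p ^ 2 := by nlinarith
    have h5 : p + 1 ≤ p ^ 2 := by nlinarith
    refine ⟨![0, s], ?_⟩
    funext i
    fin_cases i <;>
      simp [Pw, ha0, hb0, h3, hs.symm, zero_pow (show p ^ 2 - 1 ≠ 0 by omega),
        zero_pow (show p ^ 2 - p ≠ 0 by omega), zero_pow (show p ^ 2 ≠ 0 by omega)]
  · -- affine point
    obtain ⟨u, hu⟩ := IsAlgClosed.exists_pow_nat_eq (x.rep 3) (show 0 < p ^ 2 by omega)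
    have hu0 : u ≠ 0 := by
      rintro rfl
      rw [zero_pow (show p ^ 2 ≠ 0 by omega)] at hu
      exact h3 hu.symm
    have hv3 : x.rep 3 = u ^ p ^ 2 := hu.symm
    set s : K := x.rep 0 / u ^ (p ^ 2 - 1) with hs
    have hupow : (u : K) ^ (p ^ 2 - 1) ≠ 0 := pow_ne_zero _ hu0
    refine ⟨![u, s], ?_⟩
    have c0 : s * u ^ (p ^ 2 - 1) = x.rep 0 := div_mul_cancel₀ _ hupow
    have hv0p : x.rep 0 ^ p = x.rep 1 * u ^ (p ^ 2 * (p - 1)) := by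
      rw [ha, hv3, ← pow_mul]
    have hv1p : x.rep 1 ^ p = x.rep 2 * u ^ (p ^ 2 * (p - 1)) := by
      rw [hb, hv3, ← pow_mul]
    have c1 : s ^ p * u ^ (p ^ 2 - p) = x.rep 1 := by
      rw [hs, div_pow, ← pow_mul, hv0p,
        show (p ^ 2 - 1) * p = p ^ 2 * (p - 1) + (p ^ 2 - p) by
          rw [Nat.sub_mul, Nat.mul_sub, one_mul, mul_one]
          have h4 : p ^ 2 ≤ p ^ 2 * p := Nat.le_mul_of_pos_right _ (by omega)
          have h5 : p ≤ p ^ 2 * p := le_trans h2 h4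
          omega,
        pow_add]
      field_simp
      try ring
    have c2 : s ^ p ^ 2 = x.rep 2 := by
      have hv0p2 : x.rep 0 ^ p ^ 2
          = x.rep 2 * (u ^ (p ^ 2 * (p - 1)) * u ^ (p ^ 2 * (p - 1) * p)) := by
        rw [show p ^ 2 = p * p by ring, pow_mul, hv0p, mul_pow, hv1p, ← pow_mul]
        ring
      rw [hs, div_pow, ← pow_mul, hv0p2,
        show (p ^ 2 - 1) * p ^ 2 = p ^ 2 * (p - 1) + p ^ 2 * (p - 1) * p by
          rw [Nat.sub_mul, one_mul, Nat.mul_sub, mul_one, Nat.sub_mul]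
          have hA : p ^ 2 * p ^ 2 = p ^ 2 * p * p := by ring
          have f1 : p ^ 2 ≤ p ^ 2 * p := Nat.le_mul_of_pos_right _ (by omega)
          have f2 : p ^ 2 * p ≤ p ^ 2 * p * p := Nat.le_mul_of_pos_right _ (by omega)
          omega,
        pow_add]
      field_simp
      try ring
    funext i
    fin_cases i <;> simp only [Pw, Matrix.cons_val_zero, Matrix.cons_val_one, Matrix.head_cons,
      Matrix.cons_val_two, Matrix.tail_cons, Matrix.cons_val_three]
    · exact c0.symm
    · exact c1.symm
    · exact c2.symm
    · exact hv3

end CE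
namespace CE
variable {K : Type} [Field K]
open Projectivization

lemma eval_aeval_Pv (p : ℕ) (f : MvPolynomial (Fin 4) K) (w : Fin 2 → K) :
    eval w (aeval (Pv p) f) = eval (Pw p w) f := by
  rw [aeval_def, eval_eval₂]
  have h1 : ((eval w).comp (algebraMap K (MvPolynomial (Fin 2) K))) = RingHom.id K := by
    ext r; simp
  have h2 : (fun s => eval w (Pv p s)) = Pw p w := funext fun i => eval_Pv p w i
  rw [h1, h2, eval₂_id]

lemma basic_isOpen {n : ℕ} (f : MvPolynomial (Fin (n + 1)) K) (d : ℕ)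
    (hf : f.IsHomogeneous d) :
    IsOpen {x : Pn K n | eval x.rep f ≠ 0} :=
  TopologicalSpace.isOpen_generateFrom_of_mem ⟨f, d, hf, rfl⟩

lemma curve_isClosed {p : ℕ} (hp : 1 ≤ p) : IsClosed (Curve K p) := by
  rw [← isOpen_compl_iff]
  have : (Curve K p)ᶜ = {x : Pn K 3 | eval x.rep (f₁ K p) ≠ 0} ∪
      {x : Pn K 3 | eval x.rep (f₂ K p) ≠ 0} := by
    ext x
    simp only [Curve, Set.mem_compl_iff, Set.mem_setOf_eq, Set.mem_union, not_and_or]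
  rw [this]
  exact (basic_isOpen _ p (f₁_isHomogeneous hp)).union (basic_isOpen _ p (f₂_isHomogeneous hp))

lemma mk_eq_of_rep_eq {x : Pn K 3} {v : Fin 4 → K} (hv : v ≠ 0) (h : x.rep = v) :
    Projectivization.mk K v hv = x := by
  subst h; exact x.mk_rep

lemma loc {p : ℕ} (hp : 1 ≤ p) {U : Set (Pn K 3)} (hU : IsOpen U)
    {w0 : Fin 2 → K} (hw0 : Pw p w0 ≠ 0)
    (hxU : Projectivization.mk K (Pw p w0) hw0 ∈ U) :
    ∃ (g : MvPolynomial (Fin 2) K) (m : ℕ), g.IsHomogeneous m ∧ eval w0 g ≠ 0 ∧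
      ∀ (w : Fin 2 → K) (hw : Pw p w ≠ 0), eval w g ≠ 0 →
        Projectivization.mk K (Pw p w) hw ∈ U := by
  have hU' : TopologicalSpace.GenerateOpen
      {U | ∃ (f : MvPolynomial (Fin 4) K) (d : ℕ), f.IsHomogeneous d ∧
        U = {x : Pn K 3 | eval x.rep f ≠ 0}} U := hU
  clear hU
  revert hxU
  induction hU' with
  | basic V hV =>
      intro hxU
      obtain ⟨f, d, hf, rfl⟩ := hV
      have hx : eval (Projectivization.mk K (Pw p w0) hw0).rep f ≠ 0 := hxU
      refine ⟨aeval (Pv p) f, p ^ 2 * d, hf.aeval _ (Pv_isHomogeneous hp), ?_, ?_⟩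
      · rw [eval_aeval_Pv]
        exact fun h => hx ((eval_rep_mk_eq_zero_iff hw0 hf).mpr h)
      · intro w hw hgw
        rw [eval_aeval_Pv] at hgw
        exact fun h => hgw ((eval_rep_mk_eq_zero_iff hw hf).mp h)
  | univ =>
      exact fun _ => ⟨1, 0, isHomogeneous_one _ _, by simp, fun _ _ _ => trivial⟩
  | inter U V hU1 hV1 ihU ihV =>
      intro hxUV
      obtain ⟨g1, m1, hg1, he1, hmem1⟩ := ihU hxUV.1
      obtain ⟨g2, m2, hg2, he2, hmem2⟩ := ihV hxUV.2
      refine ⟨g1 * g2, m1 + m2, hg1.mul hg2, by simp [he1, he2], fun w hw hgw => ?_⟩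
      rw [map_mul] at hgw
      exact ⟨hmem1 w hw (left_ne_zero_of_mul hgw), hmem2 w hw (right_ne_zero_of_mul hgw)⟩
  | sUnion S hS ih =>
      intro hxU
      obtain ⟨V, hVS, hxV⟩ := hxU
      obtain ⟨g, m, hg, he, hmem⟩ := ih V hVS hxV
      exact ⟨g, m, hg, he, fun w hw hgw => Set.mem_sUnion.mpr ⟨V, hVS, hmem w hw hgw⟩⟩

lemma exists_eval_ne_zero [Infinite K] {g : MvPolynomial (Fin 2) K} (hg : g ≠ 0) :
    ∃ w : Fin 2 → K, eval w g ≠ 0 := by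
  by_contra h
  push_neg at h
  exact hg (MvPolynomial.funext fun w => by simpa using h w)

lemma curve_isIrreducible [IsAlgClosed K] {p : ℕ} (hp : 2 ≤ p) :
    IsIrreducible (Curve K p) := by
  have hp1 : 1 ≤ p := by omega
  have hw10 : Pw (K := K) p ![1, 0] ≠ 0 := Pw_ne_zero hp1 (by simp)
  constructor
  · exact ⟨_, mk_Pw_mem_Curve hp1 hw10⟩
  · rintro U V hUo hVo ⟨x, hxC, hxU⟩ ⟨y, hyC, hyV⟩
    obtain ⟨wx, hwx⟩ := rep_param hp hxC
    obtain ⟨wy, hwy⟩ := rep_param hp hyC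
    have hwx0 : Pw p wx ≠ 0 := hwx ▸ x.rep_nonzero
    have hwy0 : Pw p wy ≠ 0 := hwy ▸ y.rep_nonzero
    obtain ⟨gU, mU, hgU, heU, hmemU⟩ := loc hp1 hUo hwx0 ((mk_eq_of_rep_eq hwx0 hwx).symm ▸ hxU)
    obtain ⟨gV, mV, hgV, heV, hmemV⟩ := loc hp1 hVo hwy0 ((mk_eq_of_rep_eq hwy0 hwy).symm ▸ hyV)
    have hgU0 : gU ≠ 0 := fun h => heU (by rw [h, map_zero])
    have hgV0 : gV ≠ 0 := fun h => heV (by rw [h, map_zero])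
    have hN : (X 0 : MvPolynomial (Fin 2) K) * (gU * gV) ≠ 0 :=
      mul_ne_zero (X_ne_zero _) (mul_ne_zero hgU0 hgV0)
    obtain ⟨w, hwN⟩ := exists_eval_ne_zero hN
    rw [map_mul, map_mul, eval_X] at hwN
    have hw0 : w 0 ≠ 0 := left_ne_zero_of_mul hwN
    have heU' : eval w gU ≠ 0 := left_ne_zero_of_mul (right_ne_zero_of_mul hwN)
    have heV' : eval w gV ≠ 0 := right_ne_zero_of_mul (right_ne_zero_of_mul hwN)
    have hw : Pw p w ≠ 0 := Pw_ne_zero hp1 (fun hz => hw0 hz.1)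
    exact ⟨_, mk_Pw_mem_Curve hp1 hw, hmemU w hw heU', hmemV w hw heV'⟩

lemma singleton_closed (a : Pn K 3) : IsClosed ({a} : Set (Pn K 3)) := by
  rw [← isOpen_compl_iff]
  have : ({a}ᶜ : Set (Pn K 3)) =
      ⋃ (i : Fin 4), ⋃ (j : Fin 4),
        {y : Pn K 3 | eval y.rep (C (a.rep j) * X i - C (a.rep i) * X j) ≠ 0} := by
    ext y
    simp only [Set.mem_compl_iff, Set.mem_singleton_iff, Set.mem_iUnion, Set.mem_setOf_eq]
    constructor
    · intro hya
      by_contra hcon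
      push_neg at hcon
      have hprop : ∀ i j : Fin 4, a.rep j * y.rep i = a.rep i * y.rep j := by
        intro i j
        have := hcon i j
        simp only [map_sub, map_mul, eval_C, eval_X, not_not] at this
        exact sub_eq_zero.mp this
      obtain ⟨j0, hj0⟩ := Function.ne_iff.mp a.rep_nonzero
      have hj0' : a.rep j0 ≠ 0 := by simpa using hj0
      apply hya
      have hyr : y.rep = (y.rep j0 / a.rep j0) • a.rep := by
        funext i
        have h := hprop i j0
        simp only [Pi.smul_apply, smul_eq_mul]
        field_simp
        linear_combination h
      have ht : (y.rep j0 / a.rep j0) ≠ 0 := by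
        intro h
        apply y.rep_nonzero
        rw [hyr, h, zero_smul]
      calc y = Projectivization.mk K y.rep y.rep_nonzero := y.mk_rep.symm
        _ = Projectivization.mk K a.rep a.rep_nonzero := by
            rw [Projectivization.mk_eq_mk_iff]
            refine ⟨Units.mk0 _ ht, ?_⟩
            conv_rhs => rw [hyr]
            rfl
        _ = a := a.mk_rep
    · rintro ⟨i, j, hij⟩ rfl
      apply hij
      simp [mul_comm]
  rw [this]
  exact isOpen_iUnion fun i => isOpen_iUnion fun j =>
    basic_isOpen _ 1 (((isHomogeneous_X K i).C_mul _).sub ((isHomogeneous_X K j).C_mul _))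

end CE
namespace CE
variable {K : Type} [Field K]
open Projectivization

lemma w_decomp {w : Fin 2 → K} (h : w 0 ≠ 0) : w = w 0 • ![1, w 1 / w 0] := by
  funext i
  fin_cases i
  · simp
  · show w 1 = w 0 * (w 1 / w 0)
    field_simp

lemma eval₂_poly_eval (g : MvPolynomial (Fin 2) K) (q0 q1 : Polynomial K) (u : K) :
    Polynomial.eval u (eval₂ Polynomial.C ![q0, q1] g)
      = eval ![Polynomial.eval u q0, Polynomial.eval u q1] g := by
  rw [show (Polynomial.eval u : Polynomial K → K) (eval₂ Polynomial.C ![q0, q1] g)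
      = (Polynomial.evalRingHom u) (eval₂ Polynomial.C ![q0, q1] g) from rfl,
    eval₂_comp_left (Polynomial.evalRingHom u)]
  have h1 : (Polynomial.evalRingHom u).comp (Polynomial.C) = RingHom.id K := by
    ext r; simp
  have h2 : (⇑(Polynomial.evalRingHom u) ∘ ![q0, q1])
      = ![Polynomial.eval u q0, Polynomial.eval u q1] := by
    funext i; fin_cases i <;> simp
  rw [h1, h2, eval₂_id]

lemma g_eq_zero_of_vanish [Infinite K] {g : MvPolynomial (Fin 2) K} {m : ℕ}
    (hg : g.IsHomogeneous m) (h : ∀ s : K, eval ![1, s] g = 0) : g = 0 := by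
  have hall : ∀ w : Fin 2 → K, w 0 ≠ 0 → eval w g = 0 := by
    intro w h0
    rw [w_decomp h0, eval_smul_of_isHomogeneous hg, h _, mul_zero]
  have hzero : ∀ w : Fin 2 → K, eval w g = 0 := by
    intro w
    by_cases h0 : w 0 = 0
    · set gs : Polynomial K := eval₂ Polynomial.C ![Polynomial.X, Polynomial.C (w 1)] g with hgs
      have hev : ∀ u : K, Polynomial.eval u gs = eval ![u, w 1] g := by
        intro u
        rw [hgs, eval₂_poly_eval]
        simp
      have hroots : gs = 0 := by
        apply Polynomial.eq_zero_of_infinite_isRoot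
        have hsub2 : ({(0 : K)}ᶜ : Set K) ⊆ {x | gs.IsRoot x} := by
          intro u hu
          show Polynomial.IsRoot gs u
          rw [Polynomial.IsRoot, hev u]
          exact hall _ (by simpa using hu)
        exact ((Set.finite_singleton (0 : K)).infinite_compl).mono hsub2
      have hw : w = ![(0 : K), w 1] := by
        funext i; fin_cases i <;> simp [h0]
      rw [hw, ← hev 0, hroots, Polynomial.eval_zero]
    · exact hall w h0
  exact MvPolynomial.funext fun w => by simpa using hzero w

lemma closed_inter_finite [IsAlgClosed K] {p : ℕ} (hp : 2 ≤ p) {F : Set (Pn K 3)}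
    (hF : IsClosed F) (hne : ¬ Curve K p ⊆ F) : (Curve K p ∩ F).Finite := by
  have hp1 : 1 ≤ p := by omega
  obtain ⟨x, hxC, hxF⟩ := Set.not_subset.mp hne
  obtain ⟨w0, hw0eq⟩ := rep_param hp hxC
  have hw00 : Pw p w0 ≠ 0 := hw0eq ▸ x.rep_nonzero
  have hxO : Projectivization.mk K (Pw p w0) hw00 ∈ Fᶜ := by
    rw [mk_eq_of_rep_eq hw00 hw0eq]; exact hxF
  obtain ⟨g, m, hg, he0, hmem⟩ := loc hp1 hF.isOpen_compl hw00 hxO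
  set hpoly : Polynomial K := eval₂ Polynomial.C ![1, Polynomial.X] g with hhp
  have hev : ∀ s : K, Polynomial.eval s hpoly = eval ![1, s] g := by
    intro s
    rw [hhp, show (1 : Polynomial K) = Polynomial.C 1 from rfl, eval₂_poly_eval]
    simp
  have hpoly0 : hpoly ≠ 0 := by
    intro h
    apply he0
    have hgz : g = 0 := g_eq_zero_of_vanish hg
      (fun s => by rw [← hev s, h, Polynomial.eval_zero])
    rw [hgz, map_zero]
  have hinf0 : Pw (K := K) p ![0, 1] ≠ 0 := Pw_ne_zero hp1 (by simp)
  have haff : ∀ s : K, Pw (K := K) p ![1, s] ≠ 0 := fun s => Pw_ne_zero hp1 (by simp)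
  have hsub : Curve K p ∩ F ⊆
      {Projectivization.mk K (Pw p ![0, 1]) hinf0} ∪
        ((fun s : K => Projectivization.mk K (Pw p ![1, s]) (haff s)) ''
          {s : K | Polynomial.eval s hpoly = 0}) := by
    rintro y ⟨hyC, hyF⟩
    obtain ⟨w, hweq⟩ := rep_param hp hyC
    have hw0 : Pw p w ≠ 0 := hweq ▸ y.rep_nonzero
    have hyeq : Projectivization.mk K (Pw p w) hw0 = y := mk_eq_of_rep_eq hw0 hweq
    have hgw : eval w g = 0 := by
      by_contra hcon
      exact (hmem w hw0 hcon) (by rw [hyeq]; exact hyF)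
    by_cases h0 : w 0 = 0
    · left
      have h1 : w 1 ≠ 0 := fun h1 => hw0 (Pw_eq_zero hp1 h0 h1)
      have hwdec : w = w 1 • ![0, 1] := by
        funext i; fin_cases i <;> simp [h0]
      rw [Set.mem_singleton_iff, ← hyeq, Projectivization.mk_eq_mk_iff]
      refine ⟨Units.mk0 (w 1 ^ p ^ 2) (pow_ne_zero _ h1), ?_⟩
      conv_rhs => rw [hwdec, Pw_smul hp1]
      rfl
    · right
      have hdec : Pw p w = (w 0) ^ p ^ 2 • Pw p ![1, w 1 / w 0] := by
        conv_lhs => rw [w_decomp h0]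
        rw [Pw_smul hp1]
      refine ⟨w 1 / w 0, ?_, ?_⟩
      · rw [Set.mem_setOf_eq, hev]
        have heq : eval w g = (w 0) ^ m * eval ![1, w 1 / w 0] g := by
          conv_lhs => rw [w_decomp h0]
          rw [eval_smul_of_isHomogeneous hg]
        rw [heq] at hgw
        rcases mul_eq_zero.mp hgw with h | h
        · exact absurd h (pow_ne_zero _ h0)
        · exact h
      · show Projectivization.mk K (Pw p ![1, w 1 / w 0]) _ = y
        rw [← hyeq, Projectivization.mk_eq_mk_iff]
        refine ⟨(Units.mk0 ((w 0) ^ p ^ 2) (pow_ne_zero _ h0))⁻¹, ?_⟩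
        show (((w 0) ^ p ^ 2)⁻¹ : K) • Pw p w = Pw p ![1, w 1 / w 0]
        rw [hdec, smul_smul, inv_mul_cancel₀ (pow_ne_zero _ h0), one_smul]
  exact ((Set.finite_singleton _).union
    ((Polynomial.finite_setOf_isRoot hpoly0).image _)).subset hsub

lemma irred_finite_subsingleton {D : Set (Pn K 3)} (hD : IsPreirreducible D)
    (hfin : D.Finite) : D.Subsingleton := by
  intro a ha b hb
  by_contra hab
  have hclosed : IsClosed (D \ {a}) := by
    have : D \ {a} = ⋃ c ∈ D \ {a}, {c} := (Set.biUnion_of_singleton _).symm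
    rw [this]
    exact (hfin.diff : (D \ {a}).Finite).isClosed_biUnion fun c _ => singleton_closed c
  obtain ⟨c, hcD, hcU, hcV⟩ := hD (D \ {a})ᶜ {a}ᶜ hclosed.isOpen_compl
    (singleton_closed a).isOpen_compl ⟨a, ha, by simp⟩ ⟨b, hb, by simpa using Ne.symm hab⟩
  exact hcV (by simpa using (not_not.mp (fun h => hcU ⟨hcD, h⟩)))

end CE
namespace CE
variable {K : Type} [Field K]
open Projectivization TopologicalSpace

lemma no_three [IsAlgClosed K] {p : ℕ} (hp : 2 ≤ p)
    (T1 T2 T3 : IrreducibleCloseds ↥(Curve K p))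
    (h12 : T1 < T2) (h23 : T2 < T3) : False := by
  have key : ∀ (S S' : IrreducibleCloseds ↥(Curve K p)), S < S' →
      Subtype.val '' (S' : Set ↥(Curve K p)) ≠ Curve K p → False := by
    intro S S' hlt hne
    obtain ⟨F, hFclosed, hFpre⟩ := isClosed_induced_iff.mp S'.isClosed'
    have himg : Subtype.val '' (S' : Set ↥(Curve K p)) = Curve K p ∩ F := by
      have hFpre' : Subtype.val ⁻¹' F = (S' : Set ↥(Curve K p)) := hFpre
      rw [← hFpre']
      exact Subtype.image_preimage_coe _ _
    have hCF : ¬ Curve K p ⊆ F := by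
      intro hsub
      exact hne (by rw [himg, Set.inter_eq_self_of_subset_left hsub])
    have hfin : (Subtype.val '' (S' : Set ↥(Curve K p))).Finite := by
      rw [himg]; exact closed_inter_finite hp hFclosed hCF
    have hirr : IsIrreducible (Subtype.val '' (S' : Set ↥(Curve K p))) :=
      S'.isIrreducible'.image _ continuous_subtype_val.continuousOn
    have hsing := irred_finite_subsingleton hirr.isPreirreducible hfin
    obtain ⟨a, haS⟩ := S.isIrreducible'.nonempty
    obtain ⟨b, hbS', hbS⟩ : ∃ b, b ∈ (S' : Set ↥(Curve K p)) ∧ b ∉ (S : Set ↥(Curve K p)) := by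
      by_contra hcon
      push_neg at hcon
      exact hlt.ne (le_antisymm hlt.le fun x hx => hcon x hx)
    have haS' : a ∈ (S' : Set ↥(Curve K p)) := hlt.le haS
    have : (a : Pn K 3) = (b : Pn K 3) := hsing ⟨a, haS', rfl⟩ ⟨b, hbS', rfl⟩
    exact hbS (Subtype.coe_injective this ▸ haS)
  apply key T1 T2 h12
  intro h2eq
  have h3sub : Subtype.val '' (T3 : Set ↥(Curve K p)) ⊆ Curve K p := by
    rintro _ ⟨t, _, rfl⟩; exact t.2
  have h23sub : Subtype.val '' (T2 : Set ↥(Curve K p)) ⊆ Subtype.val '' (T3 : Set ↥(Curve K p)) :=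
    Set.image_mono h23.le
  have himg_eq : Subtype.val '' (T2 : Set ↥(Curve K p))
      = Subtype.val '' (T3 : Set ↥(Curve K p)) :=
    le_antisymm h23sub (by rw [h2eq]; exact h3sub)
  have hcar : (T2 : Set ↥(Curve K p)) = (T3 : Set ↥(Curve K p)) :=
    (Set.image_injective.mpr Subtype.coe_injective) himg_eq
  exact h23.ne (IrreducibleCloseds.ext hcar)

lemma curve_sdim [IsAlgClosed K] {p : ℕ} (hp : 2 ≤ p) :
    sdim (Curve K p) = (1 : WithBot ℕ∞) := by
  have hp1 : 1 ≤ p := by omega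
  have hw10 : Pw (K := K) p ![1, 0] ≠ 0 := Pw_ne_zero hp1 (by simp)
  have hw11 : Pw (K := K) p ![1, 1] ≠ 0 := Pw_ne_zero hp1 (by simp)
  set z1 := Projectivization.mk K (Pw p ![1, 0]) hw10 with hz1def
  set z2 := Projectivization.mk K (Pw p ![1, 1]) hw11 with hz2def
  have hz1 : z1 ∈ Curve K p := mk_Pw_mem_Curve hp1 hw10
  have hz2 : z2 ∈ Curve K p := mk_Pw_mem_Curve hp1 hw11
  have hz12 : z1 ≠ z2 := by
    intro hzeq
    rw [hz1def, hz2def, Projectivization.mk_eq_mk_iff] at hzeq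
    obtain ⟨a, ha⟩ := hzeq
    have h0 := congrFun ha 0
    simp [Pw, Units.smul_def] at h0
  -- the two-element chain
  have hA_closed : IsClosed ({(⟨z1, hz1⟩ : ↥(Curve K p))} : Set ↥(Curve K p)) := by
    have : ({(⟨z1, hz1⟩ : ↥(Curve K p))} : Set ↥(Curve K p)) = Subtype.val ⁻¹' {z1} := by
      ext t; simp [Subtype.ext_iff]
    rw [this]
    exact (singleton_closed z1).preimage continuous_subtype_val
  have hB_irr : IsIrreducible (Set.univ : Set ↥(Curve K p)) := by
    letI := Subtype.irreducibleSpace (curve_isIrreducible (K := K) hp)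
    exact IrreducibleSpace.isIrreducible_univ _
  set A : IrreducibleCloseds ↥(Curve K p) :=
    ⟨{⟨z1, hz1⟩}, isIrreducible_singleton, hA_closed⟩ with hAdef
  set B : IrreducibleCloseds ↥(Curve K p) :=
    ⟨Set.univ, hB_irr, isClosed_univ⟩ with hBdef
  have hAB : A < B := by
    rw [lt_iff_le_and_ne]
    constructor
    · intro t _; exact Set.mem_univ t
    · intro h
      have : (⟨z2, hz2⟩ : ↥(Curve K p)) ∈ A := by
        rw [h]; exact Set.mem_univ _
      have h2 : (⟨z2, hz2⟩ : ↥(Curve K p)) ∈ ({⟨z1, hz1⟩} : Set ↥(Curve K p)) := this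
      rw [Set.mem_singleton_iff, Subtype.ext_iff] at h2
      exact hz12 h2.symm
  have hKD : sdim (Curve K p) = Order.krullDim (IrreducibleCloseds ↥(Curve K p)) := rfl
  rw [hKD]
  apply le_antisymm
  · -- upper bound
    have : Nonempty (IrreducibleCloseds ↥(Curve K p)) := ⟨A⟩
    rw [Order.krullDim_eq_iSup_length]
    rw [show ((1 : WithBot ℕ∞)) = ((1 : ℕ∞) : WithBot ℕ∞) from rfl, WithBot.coe_le_coe]
    apply iSup_le
    intro q
    by_contra hlen
    push_neg at hlen
    have hlen2 : 2 ≤ q.length := by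
      rcases q with ⟨n, f, hf⟩
      simp only [RelSeries.length] at hlen ⊢
      by_contra hcon
      push_neg at hcon
      interval_cases n <;> simp_all
    have h01 : q.toFun ⟨0, by omega⟩ < q.toFun ⟨1, by omega⟩ :=
      q.strictMono (by simp [Fin.lt_def])
    have h12 : q.toFun ⟨1, by omega⟩ < q.toFun ⟨2, by omega⟩ :=
      q.strictMono (by simp [Fin.lt_def])
    exact no_three hp _ _ _ h01 h12
  · -- lower bound
    have hser : ((RelSeries.mk 1 ![A, B] (by
        intro i
        fin_cases i
        simpa using hAB) : LTSeries (IrreducibleCloseds ↥(Curve K p))).length : WithBot ℕ∞)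
        ≤ Order.krullDim (IrreducibleCloseds ↥(Curve K p)) :=
      Order.LTSeries.length_le_krullDim _
    simpa using hser

end CE
namespace CE
variable {K : Type} [Field K]
open Projectivization

lemma pderiv_aeval (j : Fin 2) (v : Fin 4 → MvPolynomial (Fin 2) K)
    (f : MvPolynomial (Fin 4) K) :
    pderiv j (aeval v f) = ∑ i, aeval v (pderiv i f) * pderiv j (v i) := by
  induction f using MvPolynomial.induction_on with
  | C a => simp
  | add f g hf hg => simp only [map_add, hf, hg, add_mul, Finset.sum_add_distrib]
  | mul_X f i hf =>
      rw [map_mul, aeval_X, pderiv_mul, hf, Finset.sum_mul]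
      have hsplit : ∀ k : Fin 4, aeval v (pderiv k (f * X i)) * pderiv j (v k)
          = aeval v (pderiv k f) * pderiv j (v k) * v i
            + (if k = i then aeval v f * pderiv j (v i) else 0) := by
        intro k
        rw [pderiv_mul, map_add, map_mul, map_mul, aeval_X, pderiv_X]
        by_cases hk : k = i
        · subst hk
          simp only [Pi.single_eq_same, if_true, map_one, mul_one]
          ring
        · rw [Pi.single_eq_of_ne (Ne.symm hk), if_neg hk, map_zero, mul_zero, add_zero, add_zero]
          ring
      rw [Finset.sum_congr rfl (fun k _ => hsplit k), Finset.sum_add_distrib,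
        Finset.sum_ite_eq' Finset.univ i (fun _ => aeval v f * pderiv j (v i))]
      simp

lemma pderiv0_vanish [IsAlgClosed K] {p : ℕ} (hp : 2 ≤ p) (hchar : (p : K) = 0)
    {f : MvPolynomial (Fin 4) K} {d : ℕ} (hf : f.IsHomogeneous d)
    (hvan : ∀ y ∈ Curve K p, eval y.rep f = 0) :
    ∀ x ∈ Curve K p, eval x.rep (pderiv 0 f) = 0 := by
  have hp1 : 1 ≤ p := by omega
  have hcharMv : ((p : ℕ) : MvPolynomial (Fin 2) K) = 0 := by
    rw [← map_natCast (C : K →+* MvPolynomial (Fin 2) K) p, hchar, map_zero]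
  have hg : aeval (Pv p) f = (0 : MvPolynomial (Fin 2) K) := by
    apply MvPolynomial.funext
    intro w
    rw [eval_aeval_Pv, map_zero]
    by_cases hw : Pw p w = 0
    · rw [hw, show (0 : Fin 4 → K) = (0 : K) • Pw p ![1, 0] from (zero_smul _ _).symm,
        eval_smul_of_isHomogeneous hf]
      by_cases hd : d = 0
      · subst hd
        rw [pow_zero, one_mul]
        have h10 : Pw (K := K) p ![1, 0] ≠ 0 := Pw_ne_zero hp1 (by simp)
        exact (eval_rep_mk_eq_zero_iff h10 hf).mp (hvan _ (mk_Pw_mem_Curve hp1 h10))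
      · rw [zero_pow hd, zero_mul]
    · exact (eval_rep_mk_eq_zero_iff hw hf).mp (hvan _ (mk_Pw_mem_Curve hp1 hw))
  have hder := congrArg (pderiv (1 : Fin 2)) hg
  rw [pderiv_aeval, map_zero] at hder
  have hP0 : pderiv (1 : Fin 2) (Pv (K := K) p 0) = X 0 ^ (p ^ 2 - 1) := by
    show pderiv (1 : Fin 2) (X 1 * X 0 ^ (p ^ 2 - 1)) = X 0 ^ (p ^ 2 - 1)
    rw [pderiv_mul, pderiv_X_self, pderiv_pow, pderiv_X_of_ne (by decide)]
    ring
  have hP1 : pderiv (1 : Fin 2) (Pv (K := K) p 1) = 0 := by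
    show pderiv (1 : Fin 2) (X 1 ^ p * X 0 ^ (p ^ 2 - p)) = 0
    rw [pderiv_mul, pderiv_pow, pderiv_X_self, pderiv_pow, pderiv_X_of_ne (by decide), hcharMv]
    ring
  have hP2 : pderiv (1 : Fin 2) (Pv (K := K) p 2) = 0 := by
    show pderiv (1 : Fin 2) (X 1 ^ p ^ 2) = 0
    rw [pderiv_pow, pderiv_X_self]
    have : ((p ^ 2 : ℕ) : MvPolynomial (Fin 2) K) = 0 := by
      rw [Nat.cast_pow, hcharMv, pow_two, zero_mul]
    rw [this]
    ring
  have hP3 : pderiv (1 : Fin 2) (Pv (K := K) p 3) = 0 := by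
    show pderiv (1 : Fin 2) (X 0 ^ p ^ 2) = 0
    rw [pderiv_pow, pderiv_X_of_ne (by decide)]
    ring
  rw [Fin.sum_univ_four, hP0, hP1, hP2, hP3, mul_zero, mul_zero, mul_zero, add_zero, add_zero,
    add_zero] at hder
  have hg0 : aeval (Pv (K := K) p) (pderiv 0 f) = 0 := by
    rcases mul_eq_zero.mp hder with h | h
    · exact h
    · exact absurd h (pow_ne_zero _ (X_ne_zero _))
  intro x hx
  obtain ⟨w, hweq⟩ := rep_param hp hx
  rw [hweq, ← eval_aeval_Pv, hg0, map_zero]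

end CE
/-- **Trisecant-lemma paper, counterexample in characteristic `p > 0`.** Over an algebraically
closed field `K` of characteristic `p > 0`, the curve `C ⊆ ℙ³` defined by the homogeneous
ideal `⟨yᵖ - z·t^(p-1), xᵖ - y·t^(p-1)⟩` is an irreducible curve (closed, irreducible, of
dimension `1`), there is a single point `q` at infinity (i.e. on the plane `t = 0`) contained
in the embedded tangent space at every smooth point of `C` (smooth points of the curve being
the points where the embedded tangent space is a line), and yet `C` is not a line. -/
theorem charP_tangent_counterexample
    (K : Type) [Field K] [IsAlgClosed K] (p : ℕ) [Fact p.Prime] [CharP K p]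
    (C : Set (Pn K 3))
    (hC : C = {x : Pn K 3 |
      MvPolynomial.eval x.rep
        ((MvPolynomial.X 1 : MvPolynomial (Fin 4) K) ^ p -
          MvPolynomial.X 2 * MvPolynomial.X 3 ^ (p - 1)) = 0 ∧
      MvPolynomial.eval x.rep
        ((MvPolynomial.X 0 : MvPolynomial (Fin 4) K) ^ p -
          MvPolynomial.X 1 * MvPolynomial.X 3 ^ (p - 1)) = 0}) :
    IsClosed C ∧ IsIrreducible C ∧ sdim C = (1 : WithBot ℕ∞) ∧
      (∃ q : Pn K 3, q.rep 3 = 0 ∧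
        ∀ x ∈ C, ∀ l : Set (Pn K 3), IsLine K l → tangentSpace K C x = l → q ∈ l) ∧
      ¬ IsLine K C := by
  have hp2 : 2 ≤ p := (Fact.out : p.Prime).two_le
  have hp1 : 1 ≤ p := by omega
  have hCC : C = CE.Curve K p := hC
  subst hCC
  refine ⟨CE.curve_isClosed hp1, CE.curve_isIrreducible hp2, CE.curve_sdim hp2, ?_, ?_⟩
  · -- the common point at infinity of all tangent lines
    have he0 : (![1, 0, 0, 0] : Fin 4 → K) ≠ 0 := by
      intro h
      simpa using congrFun h 0
    obtain ⟨a, ha⟩ := Projectivization.exists_smul_eq_mk_rep K _ he0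
    refine ⟨Projectivization.mk K ![1, 0, 0, 0] he0, ?_, ?_⟩
    · rw [← ha]
      simp
    · intro x hx l _ htan
      rw [← htan]
      intro f d hfhom hvanish
      have h0 : MvPolynomial.eval x.rep (MvPolynomial.pderiv 0 f) = 0 :=
        CE.pderiv0_vanish hp2 (CharP.cast_eq_zero K p) hfhom hvanish x hx
      rw [← ha, Fin.sum_univ_four]
      simp [h0, Units.smul_def]
  · -- not a line
    rintro ⟨W, hW2, hWeq⟩
    -- a scalar that is not fixed by Frobenius
    have hex : ∃ c : K, c ^ p ≠ c := by
      by_contra hcon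
      push_neg at hcon
      have hpoly : (Polynomial.X ^ p - Polynomial.X : Polynomial K) ≠ 0 := by
        intro h
        have hcoeff := congrArg (fun q : Polynomial K => q.coeff p) h
        simp [Polynomial.coeff_X_pow, Polynomial.coeff_X, show ¬ (1 : ℕ) = p by omega] at hcoeff
      have hfin : ({x : K | (Polynomial.X ^ p - Polynomial.X : Polynomial K).IsRoot x}).Finite :=
        Polynomial.finite_setOf_isRoot hpoly
      have huniv : (Set.univ : Set K) ⊆
          {x : K | (Polynomial.X ^ p - Polynomial.X : Polynomial K).IsRoot x} := by
        intro c _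
        show Polynomial.eval c (Polynomial.X ^ p - Polynomial.X : Polynomial K) = 0
        simp [hcon c]
      exact Set.infinite_univ (hfin.subset huniv)
    obtain ⟨c, hc⟩ := hex
    have hmem : ∀ s : K, CE.Pw p ![1, s] ∈ W := by
      intro s
      have hws : CE.Pw (K := K) p ![1, s] ≠ 0 := CE.Pw_ne_zero hp1 (by simp)
      have hxC : Projectivization.mk K (CE.Pw p ![1, s]) hws ∈ CE.Curve K p :=
        CE.mk_Pw_mem_Curve hp1 hws
      rw [hWeq] at hxC
      have hrep : (Projectivization.mk K (CE.Pw p ![1, s]) hws).rep ∈ W := hxC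
      obtain ⟨a, ha⟩ := Projectivization.exists_smul_eq_mk_rep K _ hws
      rw [← ha] at hrep
      have := W.smul_mem (((a⁻¹ : Kˣ) : K)) hrep
      rwa [Units.smul_def, smul_smul, Units.inv_mul, one_smul] at this
    -- three linearly independent vectors in W
    set v : Fin 3 → (Fin 4 → K) := ![CE.Pw p ![1, 0], CE.Pw p ![1, 1], CE.Pw p ![1, c]] with hv
    have hli : LinearIndependent K v := by
      rw [Fintype.linearIndependent_iff]
      intro g hsum
      have h0 := congrFun hsum 0
      have h1 := congrFun hsum 1
      have h3 := congrFun hsum 3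
      simp only [hv, Fin.sum_univ_three, Pi.add_apply, Pi.smul_apply, smul_eq_mul,
        Matrix.cons_val_zero, Matrix.cons_val_one, Matrix.head_cons, Matrix.cons_val_two,
        Matrix.tail_cons, Matrix.cons_val_three, CE.Pw, Pi.zero_apply, one_pow, mul_one,
        one_mul, zero_pow (show p ≠ 0 by omega)] at h0 h1 h3
      -- h0 : g 0 * 0 + g 1 * 1 + g 2 * c = 0   (coordinate 0)
      -- h1 : coordinate 1 with c^p
      -- h3 : g 0 + g 1 + g 2 = 0
      have hg2 : g 2 = 0 := by
        have hsub : g 2 * (c - c ^ p) = 0 := by linear_combination h0 - h1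
        rcases mul_eq_zero.mp hsub with h | h
        · exact h
        · exact absurd (sub_eq_zero.mp h).symm hc
      have hg1 : g 1 = 0 := by linear_combination h0 - c * hg2
      have hg0 : g 0 = 0 := by linear_combination h3 - hg1 - hg2
      intro i
      fin_cases i
      · exact hg0
      · exact hg1
      · exact hg2
    have hspan : Submodule.span K (Set.range v) ≤ W := by
      rw [Submodule.span_le]
      rintro _ ⟨i, rfl⟩
      fin_cases i
      · exact hmem 0
      · exact hmem 1
      · exact hmem c
    have hrank3 : Module.finrank K (Submodule.span K (Set.range v)) = 3 := by
      rw [finrank_span_eq_card hli]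
      simp
    have := Submodule.finrank_mono hspan
    rw [hrank3, hW2] at this
    omega
end
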